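/- arXiv:1412.7874 — 7 statements merged into one kernel-verified Lean document; each statement's English description precedes it below -/
import Mathlib

section
/- The Konno density function f_K(x;a) = sqrt(1-a^2) / (π (1-x^2) sqrt(a^2 - x^2)) on the interval (-a, a), with 0 < a < 1, integrates to 1 over (-a, a); i.e., ∫_{-a}^{a} sqrt(1-a^2)/(π (1-x^2) sqrt(a^2-x^2)) dx = 1. -/
open Real Set MeasureTheory

lemma konno_deriv_eq (a b : ℝ) (hb2 : b^2 = 1 - a^2) (θ : ℝ)
    (hden : 0 < 1 - a^2 * sin θ^2)
    (hD : 0 < cos θ^2 + b * sin θ^2) :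
    b / (π * (1 - a^2 * sin θ^2)) =
      (1 +
        1 / (1 + ((b - 1) * sin θ * cos θ / (cos θ ^ 2 + b * sin θ ^ 2)) ^ 2) *
          ((((b - 1) * cos θ * cos θ + (b - 1) * sin θ * -sin θ) * (cos θ ^ 2 + b * sin θ ^ 2) -
              (b - 1) * sin θ * cos θ * (2 * cos θ ^ 1 * -sin θ + b * (2 * sin θ ^ 1 * cos θ))) /
            (cos θ ^ 2 + b * sin θ ^ 2) ^ 2)) /
      π := by
  have hs := sin_sq_add_cos_sq θ
  set s := sin θ
  set c := cos θ
  have hDne : c^2 + b*s^2 ≠ 0 := hD.ne'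
  have hdne : 1 - a^2*s^2 ≠ 0 := hden.ne'
  have hCB : c^2 + b^2*s^2 = 1 - a^2*s^2 := by linear_combination s^2 * hb2 + hs
  have hDN : (c^2+b*s^2)^2 + ((b-1)*s*c)^2 = 1 - a^2*s^2 := by
    linear_combination (c^2+b^2*s^2)*hs + hCB
  have e1 : 1 + ((b-1)*s*c/(c^2+b*s^2))^2 = (1 - a^2*s^2)/(c^2+b*s^2)^2 := by
    rw [div_pow, ← hDN, add_div, div_self (pow_ne_zero 2 hDne)]
  rw [e1]
  have e2 : (((b - 1) * c * c + (b - 1) * s * -s) * (c ^ 2 + b * s ^ 2) -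
      (b - 1) * s * c * (2 * c ^ 1 * -s + b * (2 * s ^ 1 * c))) = (b-1)*(c^2 - b*s^2) := by
    linear_combination ((b-1)*(c^2-b*s^2)) * hs
  rw [e2]
  have e3 : 1/((1 - a^2*s^2)/(c^2+b*s^2)^2) * ((b-1)*(c^2 - b*s^2)/(c^2+b*s^2)^2)
      = (b-1)*(c^2 - b*s^2)/(1 - a^2*s^2) := by
    rw [one_div_div]
    field_simp
  rw [e3]
  have e4 : 1 + (b-1)*(c^2 - b*s^2)/(1 - a^2*s^2) = b/(1 - a^2*s^2) := by
    rw [eq_div_iff hdne, add_mul, one_mul, div_mul_cancel₀ _ hdne]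
    linear_combination (b-1)*hs - s^2*hb2
  rw [e4, div_div, mul_comm]

lemma konno_aux (a b : ℝ) (hb : 0 < b) (hb2 : b^2 = 1 - a^2) :
    ∫ θ in (-(π/2))..(π/2), b / (π * (1 - a^2 * sin θ^2)) = 1 := by
  have hπ : (0:ℝ) < π := Real.pi_pos
  have ha2 : a^2 < 1 := by nlinarith
  have hden : ∀ θ : ℝ, 0 < 1 - a^2 * sin θ^2 := by
    intro θ
    nlinarith [sin_sq_le_one θ, sq_nonneg (sin θ), sq_nonneg a]
  have hD : ∀ θ : ℝ, 0 < cos θ^2 + b * sin θ^2 := by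
    intro θ
    nlinarith [sin_sq_add_cos_sq θ, sq_nonneg (sin θ), sq_nonneg (cos θ)]
  set H : ℝ → ℝ := fun θ =>
    (θ + arctan ((b-1) * sin θ * cos θ / (cos θ^2 + b * sin θ^2))) / π with hH
  have hderiv : ∀ θ ∈ uIcc (-(π/2)) (π/2),
      HasDerivAt H (b / (π * (1 - a^2 * sin θ^2))) θ := by
    intro θ _
    have hN : HasDerivAt (fun θ => (b-1) * sin θ * cos θ)
        ((b-1) * cos θ * cos θ + (b-1) * sin θ * (-sin θ)) θ :=
      (((hasDerivAt_sin θ).const_mul (b-1)).mul (hasDerivAt_cos θ))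
    have hDd : HasDerivAt (fun θ => cos θ^2 + b * sin θ^2)
        ((2 * cos θ ^ 1 * (-sin θ)) + b * (2 * sin θ ^ 1 * cos θ)) θ :=
      ((hasDerivAt_cos θ).pow 2).add (((hasDerivAt_sin θ).pow 2).const_mul b)
    have hDne : cos θ^2 + b * sin θ^2 ≠ 0 := (hD θ).ne'
    have hQ := (hN.div hDd hDne).arctan
    have h1 := ((hasDerivAt_id θ).add hQ).div_const π
    have := konno_deriv_eq a b hb2 θ (hden θ) (hD θ)
    rw [this]
    convert h1 using 2
    all_goals rfl
  have hint : IntervalIntegrable (fun θ => b / (π * (1 - a^2 * sin θ^2)))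
      volume (-(π/2)) (π/2) := by
    apply Continuous.intervalIntegrable
    apply continuous_const.div
    · fun_prop
    · intro θ
      have := hden θ
      positivity
  rw [intervalIntegral.integral_eq_sub_of_hasDerivAt hderiv hint]
  simp only [hH]
  rw [Real.sin_pi_div_two, Real.cos_pi_div_two]
  simp [neg_div, Real.arctan_zero]
  field_simp
  ring

theorem konno_density_integrates_to_one (a : ℝ) (ha : 0 < a) (ha1 : a < 1) :
    ∫ x in (-a)..a, Real.sqrt (1 - a^2) / (π * (1 - x^2) * Real.sqrt (a^2 - x^2)) = 1 := by
  have hπ : (0:ℝ) < π := Real.pi_pos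
  have ha2 : a^2 < 1 := by nlinarith
  set b := Real.sqrt (1 - a^2) with hbdef
  have hb : 0 < b := Real.sqrt_pos.mpr (by nlinarith)
  have hb2 : b^2 = 1 - a^2 := Real.sq_sqrt (by nlinarith)
  have hden : ∀ θ : ℝ, 0 < 1 - a^2 * sin θ^2 := by
    intro θ
    nlinarith [sin_sq_le_one θ, sq_nonneg (sin θ), sq_nonneg a]
  have hsub : Ioo (-(π/2)) (π/2) ⊆ Icc (-(π/2)) (π/2) := Ioo_subset_Icc_self
  have himg : (fun θ => a * sin θ) '' Ioo (-(π/2)) (π/2) = Ioo (-a) a := by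
    ext x
    constructor
    · rintro ⟨θ, hθ, rfl⟩
      have h1 : sin θ < 1 := by
        have := Real.strictMonoOn_sin (hsub hθ) (right_mem_Icc.mpr (by linarith)) hθ.2
        rwa [Real.sin_pi_div_two] at this
      have h2 : -1 < sin θ := by
        have := Real.strictMonoOn_sin (left_mem_Icc.mpr (by linarith)) (hsub hθ) hθ.1
        rwa [Real.sin_neg, Real.sin_pi_div_two] at this
      constructor <;> · show _ ; simp only; nlinarith
    · rintro ⟨h1, h2⟩
      refine ⟨Real.arcsin (x/a), ⟨?_, ?_⟩, ?_⟩
      · exact Real.neg_pi_div_two_lt_arcsin.mpr (by rw [neg_lt, ← neg_div]; exact (div_lt_one ha).mpr (by linarith))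
      · exact Real.arcsin_lt_pi_div_two.mpr ((div_lt_one ha).mpr h2)
      · show a * sin (arcsin (x/a)) = x
        rw [Real.sin_arcsin (by rw [le_div_iff₀ ha]; nlinarith) (by rw [div_le_iff₀ ha]; nlinarith)]
        field_simp
  have hder : ∀ θ ∈ Ioo (-(π/2)) (π/2),
      HasDerivWithinAt (fun θ => a * sin θ) (a * cos θ) (Ioo (-(π/2)) (π/2)) θ :=
    fun θ _ => ((Real.hasDerivAt_sin θ).const_mul a).hasDerivWithinAt
  have hinj : InjOn (fun θ => a * sin θ) (Ioo (-(π/2)) (π/2)) := by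
    intro x hx y hy h
    exact Real.injOn_sin (hsub hx) (hsub hy) (mul_left_cancel₀ ha.ne' h)
  rw [intervalIntegral.integral_of_le (by linarith : -a ≤ a),
    MeasureTheory.integral_Ioc_eq_integral_Ioo, ← himg,
    integral_image_eq_integral_abs_deriv_smul measurableSet_Ioo hder hinj]
  have hcong : ∀ θ ∈ Ioo (-(π/2)) (π/2),
      |a * cos θ| • (b / (π * (1 - (a * sin θ)^2) * Real.sqrt (a^2 - (a * sin θ)^2)))
        = b / (π * (1 - a^2 * sin θ^2)) := by
    intro θ hθ
    have hcos : 0 < cos θ := Real.cos_pos_of_mem_Ioo hθ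
    have hsq : a^2 - (a * sin θ)^2 = (a * cos θ)^2 := by
      have := sin_sq_add_cos_sq θ
      nlinarith
    rw [hsq, Real.sqrt_sq (by positivity), abs_of_pos (by positivity), smul_eq_mul]
    have h1 : 1 - (a * sin θ)^2 = 1 - a^2 * sin θ^2 := by ring
    rw [h1]
    have := hden θ
    field_simp
  rw [MeasureTheory.setIntegral_congr_fun measurableSet_Ioo hcong,
    ← MeasureTheory.integral_Ioc_eq_integral_Ioo,
    ← intervalIntegral.integral_of_le (by linarith : -(π/2) ≤ π/2)]
  exact konno_aux a b hb hb2
end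

section
/- With f_K(x) = 1/(π(1-x^2)√(1-2x^2)) on (-1/√2, 1/√2), one has ∫_{-1/√2}^{1/√2} (1-x) f_K(x) dx = 1. -/
open Real Set MeasureTheory

set_option maxHeartbeats 1000000

noncomputable def Ghad (x : ℝ) : ℝ :=
  (Real.arcsin (x / Real.sqrt (1 - x ^ 2)) + Real.arctan (Real.sqrt (1 - 2 * x ^ 2))) / π

lemma Ghad_deriv {x : ℝ} (hx : x ∈ Set.Ioo (-(1 / Real.sqrt 2)) (1 / Real.sqrt 2)) :
    HasDerivAt Ghad ((1 - x) * (1 / (π * (1 - x ^ 2) * Real.sqrt (1 - 2 * x ^ 2)))) x := by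
  have h2 : (0:ℝ) < Real.sqrt 2 := Real.sqrt_pos.2 (by norm_num)
  have hx2 : x ^ 2 < 1 / 2 := by
    have := sq_lt_sq' hx.1 hx.2
    calc x ^ 2 < (1 / Real.sqrt 2) ^ 2 := this
      _ = 1 / 2 := by rw [div_pow, one_pow, Real.sq_sqrt] <;> norm_num
  have h1 : (0:ℝ) < 1 - 2 * x ^ 2 := by linarith
  have ht : (0:ℝ) < 1 - x ^ 2 := by nlinarith
  set s := Real.sqrt (1 - 2 * x ^ 2) with hs_def
  set t := Real.sqrt (1 - x ^ 2) with ht_def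
  have hs0 : 0 < s := Real.sqrt_pos.2 h1
  have ht0 : 0 < t := Real.sqrt_pos.2 ht
  have hs2 : s ^ 2 = 1 - 2 * x ^ 2 := Real.sq_sqrt h1.le
  have ht2 : t ^ 2 = 1 - x ^ 2 := Real.sq_sqrt ht.le
  -- derivative of t = sqrt(1-x^2)
  have hdt : HasDerivAt (fun y : ℝ => Real.sqrt (1 - y ^ 2)) (-x / t) x := by
    have hinner : HasDerivAt (fun y : ℝ => 1 - y ^ 2) (-(2 * x)) x := by
      simpa using ((hasDerivAt_pow 2 x).const_sub 1)
    have h := (Real.hasDerivAt_sqrt ht.ne').comp x hinner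
    refine h.congr_deriv (Eq.symm ?_)
    field_simp
    ring
  -- derivative of s = sqrt(1-2x^2)
  have hds : HasDerivAt (fun y : ℝ => Real.sqrt (1 - 2 * y ^ 2)) (-2 * x / s) x := by
    have hinner : HasDerivAt (fun y : ℝ => 1 - 2 * y ^ 2) (-(4 * x)) x := by
      have h := ((hasDerivAt_pow 2 x).const_mul 2).const_sub 1
      refine h.congr_deriv (Eq.symm ?_)
      push_cast
      ring
    have h := (Real.hasDerivAt_sqrt h1.ne').comp x hinner
    refine h.congr_deriv (Eq.symm ?_)
    field_simp
    ring
  -- derivative of u = x / t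
  have hdu : HasDerivAt (fun y : ℝ => y / Real.sqrt (1 - y ^ 2))
      (1 / (t * (1 - x ^ 2))) x := by
    have h := (hasDerivAt_id x).div hdt ht0.ne'
    refine h.congr_deriv (Eq.symm ?_)
    rw [← ht2]
    field_simp
    simp only [Real.sqrt_sq ht0.le, id]
    nlinarith [ht2]
  -- arcsin part
  have hu2 : (x / t) ^ 2 < 1 := by
    rw [div_pow, ht2, div_lt_one ht]; nlinarith
  have hune : x / t ≠ -1 ∧ x / t ≠ 1 := by
    constructor <;> intro h <;> rw [h] at hu2 <;> norm_num at hu2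
  have hq : Real.sqrt (1 - (x / t) ^ 2) = s / t := by
    have e : 1 - (x / t) ^ 2 = (1 - 2 * x ^ 2) / (1 - x ^ 2) := by
      rw [div_pow, ht2]; field_simp; ring
    rw [e, Real.sqrt_div h1.le, ← hs_def, ← ht_def]
  have hda : HasDerivAt (fun y : ℝ => Real.arcsin (y / Real.sqrt (1 - y ^ 2)))
      (1 / ((1 - x ^ 2) * s)) x := by
    have h := (Real.hasDerivAt_arcsin hune.1 hune.2).comp x hdu
    refine h.congr_deriv (Eq.symm ?_)
    rw [hq]
    rw [show (1:ℝ) / (s / t) = t / s from one_div_div _ _]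
    rw [← ht2]
    field_simp
  -- arctan part
  have hdb : HasDerivAt (fun y : ℝ => Real.arctan (Real.sqrt (1 - 2 * y ^ 2)))
      (-x / ((1 - x ^ 2) * s)) x := by
    have h := (Real.hasDerivAt_arctan s).comp x hds
    refine h.congr_deriv (Eq.symm ?_)
    rw [show (1:ℝ) + s ^ 2 = 2 * (1 - x ^ 2) from by rw [hs2]; ring]
    field_simp
  have hsum := ((hda.add hdb).div_const π)
  refine hsum.congr_deriv (Eq.symm ?_)
  have hπ : (0:ℝ) < π := Real.pi_pos
  field_simp
  ring

theorem hadamard_weight_integral :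
    ∫ x in (-(1 / Real.sqrt 2))..(1 / Real.sqrt 2),
      (1 - x) * (1 / (π * (1 - x^2) * Real.sqrt (1 - 2 * x^2))) = 1 := by
  have h2 : (0:ℝ) < Real.sqrt 2 := Real.sqrt_pos.2 (by norm_num)
  set a : ℝ := 1 / Real.sqrt 2 with ha_def
  have ha0 : 0 < a := by positivity
  have hab : -a < a := by linarith
  have ha2 : a ^ 2 = 1 / 2 := by
    rw [ha_def, div_pow, one_pow, Real.sq_sqrt] <;> norm_num
  -- continuity of Ghad on the closed interval
  have hcont : ContinuousOn Ghad (Set.Icc (-a) a) := by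
    apply ContinuousOn.div_const
    apply ContinuousOn.add
    · apply Real.continuous_arcsin.comp_continuousOn
      apply ContinuousOn.div continuousOn_id
      · exact (Real.continuous_sqrt.comp (continuous_const.sub (continuous_pow 2))).continuousOn
      · intro y hy
        refine (Real.sqrt_pos.2 ?_).ne'
        have h1 := hy.1; have h2' := hy.2
        have : y ^ 2 ≤ a ^ 2 := sq_le_sq' h1 h2'
        rw [ha2] at this; nlinarith
    · exact (Real.continuous_arctan.comp (Real.continuous_sqrt.comp (continuous_const.sub (continuous_const.mul (continuous_pow 2))))).continuousOn
  -- derivative on the open interval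
  have hderiv : ∀ y ∈ Set.Ioo (-a) a,
      HasDerivAt Ghad ((1 - y) * (1 / (π * (1 - y ^ 2) * Real.sqrt (1 - 2 * y ^ 2)))) y :=
    fun y hy => Ghad_deriv hy
  -- integrability from nonnegativity
  have hpos : ∀ y ∈ Set.Ioo (-a) a,
      0 ≤ (1 - y) * (1 / (π * (1 - y ^ 2) * Real.sqrt (1 - 2 * y ^ 2))) := by
    intro y hy
    have hy2 : y ^ 2 < 1 / 2 := by
      have := sq_lt_sq' hy.1 hy.2; rw [ha2] at this; linarith
    have hy1 : y < 1 := by nlinarith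
    have hs : (0:ℝ) < 1 - 2 * y ^ 2 := by linarith
    have h1' : (0:ℝ) < 1 - y ^ 2 := by nlinarith
    have h1y : (0:ℝ) ≤ 1 - y := by linarith
    have hd : (0:ℝ) < π * (1 - y ^ 2) * Real.sqrt (1 - 2 * y ^ 2) := by positivity
    exact mul_nonneg h1y (le_of_lt (by positivity))
  have hint : IntervalIntegrable
      (fun y => (1 - y) * (1 / (π * (1 - y ^ 2) * Real.sqrt (1 - 2 * y ^ 2)))) volume (-a) a := by
    rw [intervalIntegrable_iff_integrableOn_Ioc_of_le hab.le]
    exact intervalIntegral.integrableOn_deriv_of_nonneg hcont hderiv hpos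
  have key := intervalIntegral.integral_eq_sub_of_hasDeriv_right_of_le hab.le hcont
    (fun y hy => (hderiv y hy).hasDerivWithinAt) hint
  have hGa : Ghad a = 1 / 2 := by
    have e1 : 1 - a ^ 2 = 1 / 2 := by rw [ha2]; norm_num
    have e2 : 1 - 2 * a ^ 2 = 0 := by rw [ha2]; ring
    have e3 : Real.sqrt (1 - a ^ 2) = a := by
      rw [e1, ha_def]
      rw [show (1:ℝ)/2 = (1/Real.sqrt 2)^2 from by
        rw [div_pow, one_pow, Real.sq_sqrt] <;> norm_num]
      exact Real.sqrt_sq (by positivity)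
    unfold Ghad
    rw [e2, e3, Real.sqrt_zero, Real.arctan_zero, div_self ha0.ne', Real.arcsin_one]
    rw [add_zero]
    field_simp
  have hGna : Ghad (-a) = -(1 / 2) := by
    have e2 : 1 - 2 * (-a) ^ 2 = 0 := by
      rw [show ((-a):ℝ) ^ 2 = a ^ 2 from by ring, ha2]; ring
    have e3 : Real.sqrt (1 - (-a) ^ 2) = a := by
      rw [show ((-a):ℝ) ^ 2 = a ^ 2 from by ring, ha2, ha_def]
      rw [show (1:ℝ) - 1/2 = (1/Real.sqrt 2)^2 from by
        rw [div_pow, one_pow, Real.sq_sqrt] <;> norm_num]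
      exact Real.sqrt_sq (by positivity)
    unfold Ghad
    rw [e2, e3, Real.sqrt_zero, Real.arctan_zero, add_zero]
    rw [show -a / a = -1 from by field_simp]
    rw [Real.arcsin_neg, Real.arcsin_one]
    field_simp
  rw [show (fun x => (1 - x) * (1 / (π * (1 - x^2) * Real.sqrt (1 - 2 * x^2))))
      = fun x => (1 - x) * (1 / (π * (1 - x ^ 2) * Real.sqrt (1 - 2 * x ^ 2))) from rfl] at *
  rw [key, hGa, hGna]
  norm_num
end

section
/- Let w(x) = (−x^3+5x^2)/(x^2+4) for x ≥ 0 and w(x) = (−x^3+x^2)/(x^2+4) for x < 0, and f_K(x) = 1/(π(1−x^2)√(1−2x^2)) on (−1/√2, 1/√2). Then ∫_{−1/√2}^{1/√2} w(x) f_K(x) dx = 1/5. -/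
open Real Set MeasureTheory intervalIntegral

noncomputable def wojcikWeightHalf (x : ℝ) : ℝ :=
  if 0 ≤ x then (-x^3 + 5 * x^2) / (x^2 + 4) else (-x^3 + x^2) / (x^2 + 4)

noncomputable def wjF (c1 c2 c3 c4 : ℝ) (x : ℝ) : ℝ :=
  (1/π) * (c1 * (Real.log (3 + Real.sqrt (1-2*x^2)) - Real.log (3 - Real.sqrt (1-2*x^2)))
    + c2 * Real.arcsin (3*x / Real.sqrt (x^2+4))
    + c3 * Real.arcsin ((2*x-1) / (Real.sqrt 2 * (1-x)))
    + c4 * Real.arcsin ((2*x+1) / (Real.sqrt 2 * (1+x))))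

set_option maxHeartbeats 2000000 in
lemma wjF_hasDerivAt (c1 c2 c3 c4 : ℝ) {x : ℝ} (hx1 : -(1/Real.sqrt 2) < x)
    (hx2 : x < 1/Real.sqrt 2) :
    HasDerivAt (wjF c1 c2 c3 c4)
      ((1/π) * (c1 * (-6*x/((x^2+4)*Real.sqrt (1-2*x^2)))
        + c2 * (6/((x^2+4)*Real.sqrt (1-2*x^2)))
        + c3 * (1/((1-x)*Real.sqrt (1-2*x^2)))
        + c4 * (1/((1+x)*Real.sqrt (1-2*x^2))))) x := by
  have hr2 : (Real.sqrt 2)^2 = 2 := Real.sq_sqrt (by norm_num)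
  have hr0 : (0:ℝ) < Real.sqrt 2 := Real.sqrt_pos.2 (by norm_num)
  have h12 : (1/Real.sqrt 2)^2 = 1/2 := by rw [div_pow, one_pow, hr2]
  have hxx : 2*x^2 < 1 := by
    nlinarith [mul_pos (sub_pos.2 hx2) (by linarith : (0:ℝ) < 1/Real.sqrt 2 + x), h12]
  have hs0 : (0:ℝ) < Real.sqrt (1-2*x^2) := Real.sqrt_pos.2 (by linarith)
  set s := Real.sqrt (1-2*x^2) with hs_def
  have hs2 : s^2 = 1-2*x^2 := Real.sq_sqrt (by linarith)
  have hx1' : -1 < x := by nlinarith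
  have hx2' : x < 1 := by nlinarith
  have ht0 : (0:ℝ) < Real.sqrt (x^2+4) := Real.sqrt_pos.2 (by positivity)
  set t := Real.sqrt (x^2+4) with ht_def
  have ht2 : t^2 = x^2+4 := Real.sq_sqrt (by positivity)
  have hs3 : s < 3 := by nlinarith
  -- inner derivative of 1 - 2x^2
  have hinner : HasDerivAt (fun x : ℝ => 1-2*x^2) (-(4*x)) x := by
    have := ((hasDerivAt_pow 2 x).const_mul (2:ℝ)).const_sub 1
    refine HasDerivAt.congr_deriv this (Eq.symm ?_); ring
  have hsd : HasDerivAt (fun x : ℝ => Real.sqrt (1-2*x^2)) (-(4*x)/(2*s)) x :=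
    hinner.sqrt (by show 1-2*x^2 ≠ 0; linarith)
  -- log part
  have hA1 := ((hasDerivAt_const x (3:ℝ)).add hsd).log
      (by show (3:ℝ)+s ≠ 0; linarith [Real.sqrt_nonneg (1-2*x^2)])
  have hA2 := ((hasDerivAt_const x (3:ℝ)).sub hsd).log (by show (3:ℝ)-s ≠ 0; linarith)
  have hA : HasDerivAt (fun x : ℝ => Real.log (3 + Real.sqrt (1-2*x^2))
      - Real.log (3 - Real.sqrt (1-2*x^2))) (-6*x/((x^2+4)*s)) x := by
    refine HasDerivAt.congr_deriv (hA1.sub hA2) (Eq.symm ?_)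
    have h3p : (3:ℝ)+s ≠ 0 := by linarith
    have h3m : (3:ℝ)-s ≠ 0 := by linarith
    have hs2'' : Real.sqrt (1-x^2*2)^2 = 1-2*x^2 := by
      rw [show (1-x^2*2:ℝ) = 1-2*x^2 by ring]; exact hs2
    simp only [Pi.add_apply, Pi.sub_apply, ← hs_def]
    field_simp
    ring_nf
    linear_combination (12*x) * hs2
  -- arcsin (3x/sqrt(x^2+4))
  have hnum : HasDerivAt (fun x : ℝ => 3*x) 3 x := by
    simpa using (hasDerivAt_id x).const_mul (3:ℝ)
  have hden := ((hasDerivAt_pow 2 x).add_const 4).sqrt (show x^2+4 ≠ 0 by positivity)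
  have hB0 := hnum.div hden (show Real.sqrt (x^2+4) ≠ 0 from ht0.ne')
  have hB2 : (3*x/t)^2 < 1 := by
    rw [div_pow, div_lt_one (by positivity)]
    nlinarith
  have hBabs := abs_lt.mp ((sq_lt_one_iff_abs_lt_one _).mp hB2)
  have hB := (Real.hasDerivAt_arcsin hBabs.1.ne' hBabs.2.ne).comp x hB0
  have E2 : Real.sqrt (1 - (3*x/t)^2) = 2*s/t := by
    rw [show 1 - (3*x/t)^2 = (2*s/t)^2 by field_simp; linear_combination ht2 - 4*hs2]
    exact Real.sqrt_sq (by positivity)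
  have hBd : HasDerivAt (fun x : ℝ => Real.arcsin (3*x / Real.sqrt (x^2+4)))
      (6/((x^2+4)*s)) x := by
    refine HasDerivAt.congr_deriv hB (Eq.symm ?_)
    rw [E2, ← ht_def]
    norm_num
    field_simp
    ring_nf
    linear_combination (-3*x^2)*ht2
  -- arcsin ((2x-1)/(sqrt2 (1-x)))
  have hnumC : HasDerivAt (fun x : ℝ => 2*x-1) 2 x := by
    simpa using ((hasDerivAt_id x).const_mul (2:ℝ)).sub_const 1
  have hdenC : HasDerivAt (fun x : ℝ => Real.sqrt 2 * (1-x)) (Real.sqrt 2 * (0-1)) x :=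
    ((hasDerivAt_const x (1:ℝ)).sub (hasDerivAt_id x)).const_mul (Real.sqrt 2)
  have hmC : (0:ℝ) < Real.sqrt 2 * (1-x) := mul_pos hr0 (by linarith)
  have hdC0 : Real.sqrt 2 * (1-x) ≠ 0 := hmC.ne'
  have hC0 := hnumC.div hdenC hdC0
  have hC2 : ((2*x-1)/(Real.sqrt 2*(1-x)))^2 < 1 := by
    rw [div_pow, div_lt_one (pow_pos hmC 2), mul_pow, hr2]
    nlinarith
  have hCabs := abs_lt.mp ((sq_lt_one_iff_abs_lt_one _).mp hC2)
  have hC := (Real.hasDerivAt_arcsin hCabs.1.ne' hCabs.2.ne).comp x hC0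
  have E3 : Real.sqrt (1 - ((2*x-1)/(Real.sqrt 2*(1-x)))^2) = s/(Real.sqrt 2*(1-x)) := by
    rw [show 1 - ((2*x-1)/(Real.sqrt 2*(1-x)))^2 = (s/(Real.sqrt 2*(1-x)))^2 by
      have h1x : (1:ℝ)-x ≠ 0 := by linarith
      field_simp; ring_nf; linear_combination (1-2*x+x^2)*hr2 - hs2]
    exact Real.sqrt_sq (div_nonneg hs0.le hmC.le)
  have hCd : HasDerivAt (fun x : ℝ => Real.arcsin ((2*x-1) / (Real.sqrt 2*(1-x))))
      (1/((1-x)*s)) x := by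
    refine HasDerivAt.congr_deriv hC (Eq.symm ?_)
    rw [E3]
    have hsne : s ≠ 0 := hs0.ne'
    have h1x : (1:ℝ)-x ≠ 0 := by linarith
    field_simp
    ring_nf

  -- arcsin ((2x+1)/(sqrt2 (1+x)))
  have hnumD : HasDerivAt (fun x : ℝ => 2*x+1) 2 x := by
    simpa using ((hasDerivAt_id x).const_mul (2:ℝ)).add_const 1
  have hdenD : HasDerivAt (fun x : ℝ => Real.sqrt 2 * (1+x)) (Real.sqrt 2 * (0+1)) x :=
    ((hasDerivAt_const x (1:ℝ)).add (hasDerivAt_id x)).const_mul (Real.sqrt 2)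
  have hmD : (0:ℝ) < Real.sqrt 2 * (1+x) := mul_pos hr0 (by linarith)
  have hdD0 : Real.sqrt 2 * (1+x) ≠ 0 := hmD.ne'
  have hD0 := hnumD.div hdenD hdD0
  have hD2 : ((2*x+1)/(Real.sqrt 2*(1+x)))^2 < 1 := by
    rw [div_pow, div_lt_one (pow_pos hmD 2), mul_pow, hr2]
    nlinarith
  have hDabs := abs_lt.mp ((sq_lt_one_iff_abs_lt_one _).mp hD2)
  have hD := (Real.hasDerivAt_arcsin hDabs.1.ne' hDabs.2.ne).comp x hD0
  have E4 : Real.sqrt (1 - ((2*x+1)/(Real.sqrt 2*(1+x)))^2) = s/(Real.sqrt 2*(1+x)) := by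
    rw [show 1 - ((2*x+1)/(Real.sqrt 2*(1+x)))^2 = (s/(Real.sqrt 2*(1+x)))^2 by
      have h1x : (1:ℝ)+x ≠ 0 := by linarith
      field_simp; ring_nf; linear_combination (1+2*x+x^2)*hr2 - hs2]
    exact Real.sqrt_sq (div_nonneg hs0.le hmD.le)
  have hDd : HasDerivAt (fun x : ℝ => Real.arcsin ((2*x+1) / (Real.sqrt 2*(1+x))))
      (1/((1+x)*s)) x := by
    refine HasDerivAt.congr_deriv hD (Eq.symm ?_)
    rw [E4]
    have hsne : s ≠ 0 := hs0.ne'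
    have h1x : (1:ℝ)+x ≠ 0 := by linarith
    field_simp
    ring_nf

  have H := ((((hA.const_mul c1).add (hBd.const_mul c2)).add (hCd.const_mul c3)).add
      (hDd.const_mul c4)).const_mul (1/π)
  exact H


lemma wjF_continuousOn (c1 c2 c3 c4 : ℝ) :
    ContinuousOn (wjF c1 c2 c3 c4) (Icc (-(1/Real.sqrt 2)) (1/Real.sqrt 2)) := by
  have hr2 : (Real.sqrt 2)^2 = 2 := Real.sq_sqrt (by norm_num)
  have hr0 : (0:ℝ) < Real.sqrt 2 := Real.sqrt_pos.2 (by norm_num)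
  have ha1 : 1/Real.sqrt 2 < 1 := by rw [div_lt_one hr0]; nlinarith
  have hs_cont : Continuous fun x : ℝ => Real.sqrt (1-2*x^2) :=
    (continuous_const.sub (continuous_const.mul (continuous_pow 2))).sqrt
  have hsle : ∀ x : ℝ, Real.sqrt (1-2*x^2) ≤ 1 := fun x => by
    calc Real.sqrt (1-2*x^2) ≤ Real.sqrt 1 := Real.sqrt_le_sqrt (by nlinarith [sq_nonneg x])
    _ = 1 := Real.sqrt_one
  have hs_nn : ∀ x : ℝ, 0 ≤ Real.sqrt (1-2*x^2) := fun x => Real.sqrt_nonneg _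
  unfold wjF
  apply ContinuousOn.mul continuousOn_const
  apply ContinuousOn.add
  apply ContinuousOn.add
  apply ContinuousOn.add
  · apply ContinuousOn.mul continuousOn_const
    apply ContinuousOn.sub
    · exact ContinuousOn.log (continuous_const.add hs_cont).continuousOn
        (fun x _ => by have := hs_nn x; intro h; linarith)
    · exact ContinuousOn.log (continuous_const.sub hs_cont).continuousOn
        (fun x _ => by have := hsle x; intro h; linarith)
  · apply ContinuousOn.mul continuousOn_const
    apply Real.continuous_arcsin.comp_continuousOn
    apply ContinuousOn.div ((continuous_const.mul continuous_id).continuousOn)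
      (((continuous_pow 2).add continuous_const).sqrt.continuousOn)
    exact fun x _ => (Real.sqrt_pos.2 (by show (0:ℝ) < x^2+4; positivity)).ne'
  · apply ContinuousOn.mul continuousOn_const
    apply Real.continuous_arcsin.comp_continuousOn
    apply ContinuousOn.div (((continuous_const.mul continuous_id).sub continuous_const).continuousOn)
      (continuous_const.mul (continuous_const.sub continuous_id)).continuousOn
    intro x hx
    exact (mul_pos hr0 (by have := hx.2; show (0:ℝ) < 1 - x; linarith)).ne'
  · apply ContinuousOn.mul continuousOn_const
    apply Real.continuous_arcsin.comp_continuousOn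
    apply ContinuousOn.div (((continuous_const.mul continuous_id).add continuous_const).continuousOn)
      (continuous_const.mul (continuous_const.add continuous_id)).continuousOn
    intro x hx
    exact (mul_pos hr0 (by have := hx.1; show (0:ℝ) < 1 + x; linarith)).ne'

lemma wjF_eval_pos (c1 c2 c3 c4 : ℝ) :
    wjF c1 c2 c3 c4 (1/Real.sqrt 2) = (c2+c3+c4) * (1/2) := by
  have hr2 : (Real.sqrt 2)^2 = 2 := Real.sq_sqrt (by norm_num)
  have hr0 : (0:ℝ) < Real.sqrt 2 := Real.sqrt_pos.2 (by norm_num)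
  have ha1 : 1/Real.sqrt 2 < 1 := by rw [div_lt_one hr0]; nlinarith
  have ha2 : ((1:ℝ)/Real.sqrt 2)^2 = 1/2 := by rw [div_pow, one_pow, hr2]
  have hs : Real.sqrt (1-2*(1/Real.sqrt 2)^2) = 0 := by rw [ha2]; norm_num
  have e1 : 3*(1/Real.sqrt 2)/Real.sqrt ((1/Real.sqrt 2)^2+4) = 1 := by
    rw [ha2, show (1:ℝ)/2+4 = (3/Real.sqrt 2)^2 by rw [div_pow, hr2]; norm_num,
      Real.sqrt_sq (by positivity)]
    field_simp
  have e2 : (2*(1/Real.sqrt 2)-1)/(Real.sqrt 2*(1-1/Real.sqrt 2)) = 1 := by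
    rw [div_eq_one_iff_eq (mul_pos hr0 (by linarith)).ne']
    field_simp
    linear_combination -hr2
  have e3 : (2*(1/Real.sqrt 2)+1)/(Real.sqrt 2*(1+1/Real.sqrt 2)) = 1 := by
    rw [div_eq_one_iff_eq (mul_pos hr0 (by positivity)).ne']
    field_simp
    linear_combination -hr2
  unfold wjF
  rw [hs, e1, e2, e3, add_zero, sub_zero, sub_self, Real.arcsin_one]
  field_simp
  ring

lemma wjF_eval_neg (c1 c2 c3 c4 : ℝ) :
    wjF c1 c2 c3 c4 (-(1/Real.sqrt 2)) = (c2+c3+c4) * (-(1/2)) := by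
  have hr2 : (Real.sqrt 2)^2 = 2 := Real.sq_sqrt (by norm_num)
  have hr0 : (0:ℝ) < Real.sqrt 2 := Real.sqrt_pos.2 (by norm_num)
  have ha1 : 1/Real.sqrt 2 < 1 := by rw [div_lt_one hr0]; nlinarith
  have ha2 : ((1:ℝ)/Real.sqrt 2)^2 = 1/2 := by rw [div_pow, one_pow, hr2]
  have hs : Real.sqrt (1-2*(-(1/Real.sqrt 2))^2) = 0 := by rw [neg_sq, ha2]; norm_num
  have e1 : 3*(-(1/Real.sqrt 2))/Real.sqrt ((-(1/Real.sqrt 2))^2+4) = -1 := by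
    rw [neg_sq, ha2, show (1:ℝ)/2+4 = (3/Real.sqrt 2)^2 by rw [div_pow, hr2]; norm_num,
      Real.sqrt_sq (by positivity)]
    field_simp
  have e2 : (2*(-(1/Real.sqrt 2))-1)/(Real.sqrt 2*(1-(-(1/Real.sqrt 2)))) = -1 := by
    rw [div_eq_iff (mul_pos hr0 (by linarith [one_div_pos.mpr hr0])).ne']
    field_simp
    linear_combination hr2
  have e3 : (2*(-(1/Real.sqrt 2))+1)/(Real.sqrt 2*(1+(-(1/Real.sqrt 2)))) = -1 := by
    rw [div_eq_iff (mul_pos hr0 (by linarith)).ne']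
    field_simp
    linear_combination hr2
  unfold wjF
  rw [hs, e1, e2, e3, add_zero, sub_zero, sub_self, Real.arcsin_neg_one]
  field_simp
  ring

lemma wjF_eval_zero (c1 c2 c3 c4 : ℝ) :
    wjF c1 c2 c3 c4 0 = (1/π) * (c1*(Real.log 4 - Real.log 2)
      + (c4 - c3) * Real.arcsin (1/Real.sqrt 2)) := by
  have hr0 : (0:ℝ) < Real.sqrt 2 := Real.sqrt_pos.2 (by norm_num)
  have hs : Real.sqrt (1-2*(0:ℝ)^2) = 1 := by norm_num
  have e1 : 3*(0:ℝ)/Real.sqrt ((0:ℝ)^2+4) = 0 := by norm_num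
  have e2 : (2*(0:ℝ)-1)/(Real.sqrt 2*(1-0)) = -(1/Real.sqrt 2) := by
    rw [neg_div']; norm_num
  have e3 : (2*(0:ℝ)+1)/(Real.sqrt 2*(1+0)) = 1/Real.sqrt 2 := by norm_num
  unfold wjF
  rw [hs, e1, e2, e3, Real.arcsin_zero, Real.arcsin_neg,
    show (3:ℝ)+1 = 4 by norm_num, show (3:ℝ)-1 = 2 by norm_num]
  ring

set_option maxHeartbeats 1000000 in
theorem wojcik_half_weight_integral :
    ∫ x in (-(1 / Real.sqrt 2))..(1 / Real.sqrt 2),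
      wojcikWeightHalf x * (1 / (π * (1 - x^2) * Real.sqrt (1 - 2 * x^2))) = 1 / 5 := by
  have hr2 : (Real.sqrt 2)^2 = 2 := Real.sq_sqrt (by norm_num)
  have hr0 : (0:ℝ) < Real.sqrt 2 := Real.sqrt_pos.2 (by norm_num)
  have ha0 : (0:ℝ) < 1/Real.sqrt 2 := by positivity
  have ha1 : 1/Real.sqrt 2 < 1 := by rw [div_lt_one hr0]; nlinarith
  have ha2 : ((1:ℝ)/Real.sqrt 2)^2 = 1/2 := by rw [div_pow, one_pow, hr2]
  set a := 1/Real.sqrt 2 with ha_def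
  set G : ℝ → ℝ := fun x => wojcikWeightHalf x * (1/(π*(1-x^2)*Real.sqrt (1-2*x^2))) with hG
  set gp : ℝ → ℝ := fun x => (-x^3 + 5*x^2)/(x^2+4) * (1/(π*(1-x^2)*Real.sqrt (1-2*x^2)))
    with hgp
  set gm : ℝ → ℝ := fun x => (-x^3 + x^2)/(x^2+4) * (1/(π*(1-x^2)*Real.sqrt (1-2*x^2)))
    with hgm
  have hbasic : ∀ x, -a < x → x < a →
      2*x^2 < 1 ∧ (0:ℝ) < Real.sqrt (1-2*x^2) ∧ -1 < x ∧ x < 1 := by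
    intro x h1 h2
    have hxx : 2*x^2 < 1 := by
      nlinarith [mul_pos (sub_pos.2 h2) (show (0:ℝ) < a + x by linarith), ha2]
    exact ⟨hxx, Real.sqrt_pos.2 (by linarith), by nlinarith, by nlinarith⟩
  -- derivative facts
  have hdp : ∀ x ∈ Ioo (-a) a, HasDerivAt (wjF (-(2/15)) (-(2/3)) (2/5) (3/5)) (gp x) x := by
    intro x hx
    obtain ⟨hxx, hs0, hm1, h1⟩ := hbasic x hx.1 hx.2
    have h := wjF_hasDerivAt (-(2/15)) (-(2/3)) (2/5) (3/5) hx.1 hx.2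
    convert h using 1
    rw [hgp]
    have h4 : (x:ℝ)^2+4 ≠ 0 := by positivity
    have hm : (1:ℝ)-x ≠ 0 := by linarith
    have hp : (1:ℝ)+x ≠ 0 := by linarith
    have hsne : Real.sqrt (1-2*x^2) ≠ 0 := hs0.ne'
    have hpi : π ≠ 0 := Real.pi_ne_zero
    have h1x2 : (1:ℝ)-x^2 ≠ 0 := by nlinarith
    field_simp
    ring
  have hdm : ∀ x ∈ Ioo (-a) a, HasDerivAt (wjF (-(2/15)) (-(2/15)) 0 (1/5)) (gm x) x := by
    intro x hx
    obtain ⟨hxx, hs0, hm1, h1⟩ := hbasic x hx.1 hx.2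
    have h := wjF_hasDerivAt (-(2/15)) (-(2/15)) 0 (1/5) hx.1 hx.2
    convert h using 1
    rw [hgm]
    have h4 : (x:ℝ)^2+4 ≠ 0 := by positivity
    have hm : (1:ℝ)-x ≠ 0 := by linarith
    have hp : (1:ℝ)+x ≠ 0 := by linarith
    have hsne : Real.sqrt (1-2*x^2) ≠ 0 := hs0.ne'
    have hpi : π ≠ 0 := Real.pi_ne_zero
    have h1x2 : (1:ℝ)-x^2 ≠ 0 := by nlinarith
    field_simp
    ring
  -- nonnegativity
  have hposp : ∀ x ∈ Ioo (0:ℝ) a, 0 ≤ gp x := by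
    intro x hx
    obtain ⟨hxx, hs0, hm1, h1⟩ := hbasic x (by linarith [hx.1]) hx.2
    apply mul_nonneg
    · exact div_nonneg (by nlinarith [hx.1.le]) (by positivity)
    · exact le_of_lt (one_div_pos.mpr
        (mul_pos (mul_pos Real.pi_pos (by nlinarith)) hs0))
  have hposm : ∀ x ∈ Ioo (-a) (0:ℝ), 0 ≤ gm x := by
    intro x hx
    obtain ⟨hxx, hs0, hm1, h1⟩ := hbasic x hx.1 (by linarith [hx.2])
    apply mul_nonneg
    · exact div_nonneg (by nlinarith) (by positivity)
    · exact le_of_lt (one_div_pos.mpr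
        (mul_pos (mul_pos Real.pi_pos (by nlinarith)) hs0))
  -- FTC on each half
  have hcontp := (wjF_continuousOn (-(2/15)) (-(2/3)) (2/5) (3/5)).mono
    (Icc_subset_Icc (by linarith) le_rfl : Icc (0:ℝ) a ⊆ Icc (-a) a)
  have hcontm := (wjF_continuousOn (-(2/15)) (-(2/15)) 0 (1/5)).mono
    (Icc_subset_Icc le_rfl (by linarith) : Icc (-a) (0:ℝ) ⊆ Icc (-a) a)
  have hdersubp : ∀ x ∈ Ioo (0:ℝ) a, HasDerivAt (wjF (-(2/15)) (-(2/3)) (2/5) (3/5)) (gp x) x :=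
    fun x hx => hdp x ⟨by linarith [hx.1], hx.2⟩
  have hdersubm : ∀ x ∈ Ioo (-a) (0:ℝ), HasDerivAt (wjF (-(2/15)) (-(2/15)) 0 (1/5)) (gm x) x :=
    fun x hx => hdm x ⟨hx.1, by linarith [hx.2]⟩
  have hintp : IntegrableOn gp (Ioc 0 a) :=
    integrableOn_deriv_of_nonneg hcontp hdersubp hposp
  have hintm : IntegrableOn gm (Ioc (-a) 0) :=
    integrableOn_deriv_of_nonneg hcontm hdersubm hposm
  have hIIp : IntervalIntegrable gp volume 0 a :=
    (intervalIntegrable_iff_integrableOn_Ioc_of_le ha0.le).2 hintp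
  have hIIm : IntervalIntegrable gm volume (-a) 0 :=
    (intervalIntegrable_iff_integrableOn_Ioc_of_le (by linarith)).2 hintm
  have keyp : ∫ x in (0:ℝ)..a, gp x
      = wjF (-(2/15)) (-(2/3)) (2/5) (3/5) a - wjF (-(2/15)) (-(2/3)) (2/5) (3/5) 0 :=
    integral_eq_sub_of_hasDeriv_right_of_le ha0.le hcontp
      (fun x hx => (hdersubp x hx).hasDerivWithinAt) hIIp
  have keym : ∫ x in (-a)..(0:ℝ), gm x
      = wjF (-(2/15)) (-(2/15)) 0 (1/5) 0 - wjF (-(2/15)) (-(2/15)) 0 (1/5) (-a) :=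
    integral_eq_sub_of_hasDeriv_right_of_le (by linarith) hcontm
      (fun x hx => (hdersubm x hx).hasDerivWithinAt) hIIm
  -- integrand equalities
  have heqp : EqOn G gp (Set.uIcc (0:ℝ) a) := by
    intro x hx
    rw [Set.uIcc_of_le ha0.le] at hx
    simp only [hG, hgp, wojcikWeightHalf, if_pos hx.1]
  have heqm : EqOn G gm (Set.uIcc (-a) (0:ℝ)) := by
    intro x hx
    rw [Set.uIcc_of_le (by linarith : -a ≤ (0:ℝ))] at hx
    by_cases hx0 : 0 ≤ x
    · have hx00 : x = 0 := le_antisymm hx.2 hx0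
      subst hx00
      simp only [hG, hgm, wojcikWeightHalf, if_pos le_rfl]
      norm_num
    · simp only [hG, hgm, wojcikWeightHalf, if_neg hx0]
  -- integrability of G
  have hGIp : IntervalIntegrable G volume 0 a := by
    rw [intervalIntegrable_iff_integrableOn_Ioc_of_le ha0.le]
    exact hintp.congr_fun (fun x hx => (heqp (by
      rw [Set.uIcc_of_le ha0.le]; exact Ioc_subset_Icc_self hx)).symm) measurableSet_Ioc
  have hGIm : IntervalIntegrable G volume (-a) 0 := by
    rw [intervalIntegrable_iff_integrableOn_Ioc_of_le (by linarith : -a ≤ (0:ℝ))]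
    exact hintm.congr_fun (fun x hx => (heqm (by
      rw [Set.uIcc_of_le (by linarith : -a ≤ (0:ℝ))]
      exact Ioc_subset_Icc_self hx)).symm) measurableSet_Ioc
  have hsplit := intervalIntegral.integral_add_adjacent_intervals hGIm hGIp
  have hmain : (∫ x in (-a)..a, G x) = 1/5 := by
    rw [← hsplit, intervalIntegral.integral_congr heqm, intervalIntegral.integral_congr heqp,
      keym, keyp, wjF_eval_pos, wjF_eval_neg, wjF_eval_zero, wjF_eval_zero]
    ring
  exact hmain
end

section
/- Let w(x) = 3x^2/(4+x^2) and f_K(x) = 1/(π(1−x^2)√(1−2x^2)) on (−1/√2, 1/√2). Then ∫_{−1/√2}^{1/√2} w(x) f_K(x) dx = 1/5. -/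
open Real Filter Set MeasureTheory intervalIntegral

lemma Wfn_deriv {x : ℝ} (hx : 0 < 1 - 2 * x ^ 2) :
    HasDerivAt (fun x : ℝ => 3 / (5 * π) * Real.arctan (x / Real.sqrt (1 - 2 * x ^ 2))
      - 2 / (5 * π) * Real.arctan (3 * x / (2 * Real.sqrt (1 - 2 * x ^ 2))))
      ((3 * x^2 / (4 + x^2)) * (1 / (π * (1 - x^2) * Real.sqrt (1 - 2 * x^2)))) x := by
  have hs0 : 0 < Real.sqrt (1 - 2 * x ^ 2) := Real.sqrt_pos.2 hx
  have hq : HasDerivAt (fun y : ℝ => 1 - 2 * y ^ 2) (-(4 * x)) x := by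
    have := ((hasDerivAt_pow 2 x).const_mul 2).const_sub 1
    exact this.congr_deriv (by norm_num; ring)
  have hsd : HasDerivAt (fun y : ℝ => Real.sqrt (1 - 2 * y ^ 2))
      (-(4 * x) / (2 * Real.sqrt (1 - 2 * x ^ 2))) x := hq.sqrt (ne_of_gt hx)
  have hu : HasDerivAt (fun y : ℝ => y / Real.sqrt (1 - 2 * y ^ 2))
      ((1 * Real.sqrt (1 - 2 * x ^ 2) - x * (-(4 * x) / (2 * Real.sqrt (1 - 2 * x ^ 2)))) /
        Real.sqrt (1 - 2 * x ^ 2) ^ 2) x :=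
    (hasDerivAt_id x).div hsd hs0.ne'
  have hv : HasDerivAt (fun y : ℝ => 3 * y / (2 * Real.sqrt (1 - 2 * y ^ 2)))
      ((3 * (2 * Real.sqrt (1 - 2 * x ^ 2)) -
        3 * x * (2 * (-(4 * x) / (2 * Real.sqrt (1 - 2 * x ^ 2))))) /
        (2 * Real.sqrt (1 - 2 * x ^ 2)) ^ 2) x := by
    have h3 : HasDerivAt (fun y : ℝ => 3 * y) 3 x := by
      simpa using (hasDerivAt_id x).const_mul 3
    exact h3.div (hsd.const_mul 2) (by positivity)
  have H := ((hu.arctan).const_mul (3 / (5 * π))).sub ((hv.arctan).const_mul (2 / (5 * π)))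
  refine H.congr_deriv ?_
  set s := Real.sqrt (1 - 2 * x ^ 2) with hsdef
  have hs : s ^ 2 = 1 - 2 * x ^ 2 := Real.sq_sqrt hx.le
  clear_value s
  have hpi : π ≠ 0 := Real.pi_ne_zero
  have h1x : (1 : ℝ) - x ^ 2 ≠ 0 := by nlinarith
  have h4x : (4 : ℝ) + x ^ 2 ≠ 0 := by positivity
  have hden1 : 1 + (x / s) ^ 2 ≠ 0 := by positivity
  have hden2 : 1 + (3 * x / (2 * s)) ^ 2 ≠ 0 := by positivity
  field_simp
  ring_nf
  linear_combination (-40*x^2*s^2 - 80*x^4 - 10*x^6) * hs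

lemma wojcik_a_sq : (1 / Real.sqrt 2) ^ 2 = 1 / 2 := by
  rw [div_pow, one_pow, Real.sq_sqrt (by norm_num : (0:ℝ) ≤ 2)]

lemma wojcik_a_pos : 0 < 1 / Real.sqrt 2 := by positivity

-- integrability on 0..a
lemma wojcik_integrable_right :
    IntervalIntegrable (fun x : ℝ =>
      (3 * x^2 / (4 + x^2)) * (1 / (π * (1 - x^2) * Real.sqrt (1 - 2 * x^2))))
      volume 0 (1 / Real.sqrt 2) := by
  set a : ℝ := 1 / Real.sqrt 2 with ha
  have ha0 : 0 < a := wojcik_a_pos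
  have ha2 : a ^ 2 = 1 / 2 := wojcik_a_sq
  have hg : IntervalIntegrable (fun t : ℝ => (a - t) ^ (-(1/2) : ℝ)) volume 0 a := by
    have h := intervalIntegral.intervalIntegrable_rpow' (a := 0) (b := a)
      (r := (-(1/2) : ℝ)) (by norm_num)
    have h2 := h.comp_sub_left a
    simpa using h2.symm
  apply hg.mono_fun
  · apply Measurable.aestronglyMeasurable
    fun_prop
  · rw [uIoc_of_le ha0.le]
    filter_upwards [MeasureTheory.ae_restrict_mem measurableSet_Ioc] with x hx
    have hx2 : x ^ 2 ≤ 1 / 2 := by nlinarith [hx.1, hx.2, ha0]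
    have h1x : (0:ℝ) < 1 - x ^ 2 := by nlinarith
    have hfnn : 0 ≤ (3 * x^2 / (4 + x^2)) * (1 / (π * (1 - x^2) * Real.sqrt (1 - 2 * x^2))) := by
      apply mul_nonneg (by positivity)
      apply div_nonneg zero_le_one
      have := Real.sqrt_nonneg (1 - 2 * x ^ 2)
      positivity
    rw [Real.norm_eq_abs, abs_of_nonneg hfnn, Real.norm_eq_abs]
    rcases eq_or_lt_of_le hx.2 with heq | hlt
    · subst heq
      have h0 : 1 - 2 * a ^ 2 = 0 := by rw [ha2]; ring
      rw [h0, Real.sqrt_zero, mul_zero, div_zero, mul_zero, sub_self,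
        Real.zero_rpow (by norm_num), abs_zero]
    · have hx2' : x ^ 2 < 1 / 2 := by nlinarith [hx.1]
      have hpos : 0 < 1 - 2 * x ^ 2 := by linarith
      have hs0 : 0 < Real.sqrt (1 - 2 * x ^ 2) := Real.sqrt_pos.2 hpos
      have hs2 : Real.sqrt (1 - 2 * x ^ 2) ^ 2 = 1 - 2 * x ^ 2 := Real.sq_sqrt hpos.le
      have hax : Real.sqrt (a - x) ≤ Real.sqrt (1 - 2 * x ^ 2) := by
        rw [show Real.sqrt (1 - 2 * x ^ 2) = Real.sqrt (Real.sqrt (1 - 2 * x ^ 2) ^ 2) by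
          rw [Real.sqrt_sq hs0.le]]
        apply Real.sqrt_le_sqrt
        have hhalf : (1:ℝ)/2 ≤ a := by nlinarith [ha2, ha0]
        nlinarith [hs2, ha2, mul_nonneg (by linarith : (0:ℝ) ≤ a - x)
          (by linarith [hx.1] : (0:ℝ) ≤ 2*a + 2*x - 1)]
      have hrw : (a - x) ^ (-(1/2) : ℝ) = (Real.sqrt (a - x))⁻¹ := by
        rw [Real.rpow_neg (by linarith), Real.sqrt_eq_rpow]
      rw [hrw, abs_of_nonneg (by positivity)]
      have step1 : (3 * x^2 / (4 + x^2)) * (1 / (π * (1 - x^2) * Real.sqrt (1 - 2 * x^2)))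
          ≤ (Real.sqrt (1 - 2 * x ^ 2))⁻¹ := by
        rw [div_mul_div_comm, inv_eq_one_div, div_le_div_iff₀ (by positivity) (by positivity)]
        have h5 : 3 * x ^ 2 ≤ π * ((4 + x^2) * (1 - x^2)) := by
          have h6 : (0:ℝ) < (4 + x^2) * (1 - x^2) := by positivity
          have h7 := mul_le_mul_of_nonneg_right Real.pi_gt_three.le h6.le
          nlinarith [h7, hx2', sq_nonneg (x^2)]
        nlinarith [mul_le_mul_of_nonneg_right h5 hs0.le, hs0]
      have step2 : (Real.sqrt (1 - 2 * x ^ 2))⁻¹ ≤ (Real.sqrt (a - x))⁻¹ := by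
        apply inv_anti₀ (Real.sqrt_pos.2 (by linarith)) hax
      linarith

lemma wojcik_tendsto_sqrt_top :
    Tendsto (fun x : ℝ => Real.sqrt (1 - 2 * x ^ 2)) (nhdsWithin (1 / Real.sqrt 2) (Iio (1 / Real.sqrt 2)))
      (nhdsWithin 0 (Ioi 0)) := by
  set a : ℝ := 1 / Real.sqrt 2 with ha
  have ha0 : 0 < a := wojcik_a_pos
  have ha2 : a ^ 2 = 1 / 2 := wojcik_a_sq
  apply tendsto_nhdsWithin_of_tendsto_nhds_of_eventually_within
  · have hc : Tendsto (fun x : ℝ => Real.sqrt (1 - 2 * x ^ 2)) (nhds a)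
        (nhds (Real.sqrt (1 - 2 * a ^ 2))) :=
      (Real.continuous_sqrt.comp (by continuity)).tendsto a
    have h0 : Real.sqrt (1 - 2 * a ^ 2) = 0 := by
      rw [ha2]; norm_num
    rw [h0] at hc
    exact hc.mono_left nhdsWithin_le_nhds
  · filter_upwards [Ioo_mem_nhdsLT_of_mem (show a ∈ Ioc (-a) a from ⟨by linarith, le_refl a⟩)]
      with x hx
    have : 0 < 1 - 2 * x ^ 2 := by nlinarith [hx.1, hx.2, ha2]
    exact Real.sqrt_pos.2 this

lemma wojcik_tendsto_sqrt_bot :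
    Tendsto (fun x : ℝ => Real.sqrt (1 - 2 * x ^ 2))
      (nhdsWithin (-(1 / Real.sqrt 2)) (Ioi (-(1 / Real.sqrt 2)))) (nhdsWithin 0 (Ioi 0)) := by
  set a : ℝ := 1 / Real.sqrt 2 with ha
  have ha0 : 0 < a := wojcik_a_pos
  have ha2 : a ^ 2 = 1 / 2 := wojcik_a_sq
  apply tendsto_nhdsWithin_of_tendsto_nhds_of_eventually_within
  · have hc : Tendsto (fun x : ℝ => Real.sqrt (1 - 2 * x ^ 2)) (nhds (-a))
        (nhds (Real.sqrt (1 - 2 * (-a) ^ 2))) :=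
      (Real.continuous_sqrt.comp (by continuity)).tendsto (-a)
    have h0 : Real.sqrt (1 - 2 * (-a) ^ 2) = 0 := by
      rw [neg_pow, ha2]; norm_num
    rw [h0] at hc
    exact hc.mono_left nhdsWithin_le_nhds
  · filter_upwards [Ioo_mem_nhdsGT_of_mem (show -a ∈ Ico (-a) a from ⟨le_refl _, by linarith⟩)]
      with x hx
    have : 0 < 1 - 2 * x ^ 2 := by nlinarith [hx.1, hx.2, ha2]
    exact Real.sqrt_pos.2 this

lemma wojcik_Wfn_top :
    Tendsto (fun x : ℝ => 3 / (5 * π) * Real.arctan (x / Real.sqrt (1 - 2 * x ^ 2))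
      - 2 / (5 * π) * Real.arctan (3 * x / (2 * Real.sqrt (1 - 2 * x ^ 2))))
      (nhdsWithin (1 / Real.sqrt 2) (Iio (1 / Real.sqrt 2))) (nhds (1 / 10)) := by
  set a : ℝ := 1 / Real.sqrt 2 with ha
  have ha0 : 0 < a := wojcik_a_pos
  have hinv : Tendsto (fun x : ℝ => (Real.sqrt (1 - 2 * x ^ 2))⁻¹)
      (nhdsWithin a (Iio a)) atTop := tendsto_inv_nhdsGT_zero.comp wojcik_tendsto_sqrt_top
  have hid : Tendsto (fun x : ℝ => x) (nhdsWithin a (Iio a)) (nhds a) :=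
    tendsto_id.mono_right nhdsWithin_le_nhds
  have h1 : Tendsto (fun x : ℝ => x / Real.sqrt (1 - 2 * x ^ 2)) (nhdsWithin a (Iio a)) atTop := by
    have := Filter.Tendsto.pos_mul_atTop ha0 hid hinv
    simpa [div_eq_mul_inv] using this
  have h2 : Tendsto (fun x : ℝ => 3 * x / (2 * Real.sqrt (1 - 2 * x ^ 2)))
      (nhdsWithin a (Iio a)) atTop := by
    have hid2 : Tendsto (fun x : ℝ => 3 * x / 2) (nhdsWithin a (Iio a)) (nhds (3 * a / 2)) := by
      exact (hid.const_mul 3).div_const 2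
    have := Filter.Tendsto.pos_mul_atTop (by linarith : 0 < 3 * a / 2) hid2 hinv
    apply this.congr
    intro x
    ring
  have harc1 : Tendsto (fun x : ℝ => Real.arctan (x / Real.sqrt (1 - 2 * x ^ 2)))
      (nhdsWithin a (Iio a)) (nhds (π / 2)) :=
    (tendsto_nhds_of_tendsto_nhdsWithin Real.tendsto_arctan_atTop).comp h1
  have harc2 : Tendsto (fun x : ℝ => Real.arctan (3 * x / (2 * Real.sqrt (1 - 2 * x ^ 2))))
      (nhdsWithin a (Iio a)) (nhds (π / 2)) :=
    (tendsto_nhds_of_tendsto_nhdsWithin Real.tendsto_arctan_atTop).comp h2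
  have := ((harc1.const_mul (3 / (5 * π))).sub (harc2.const_mul (2 / (5 * π))))
  have hval : 3 / (5 * π) * (π / 2) - 2 / (5 * π) * (π / 2) = 1 / 10 := by
    have hpi : π ≠ 0 := Real.pi_ne_zero
    field_simp
    ring
  rwa [hval] at this

lemma wojcik_Wfn_bot :
    Tendsto (fun x : ℝ => 3 / (5 * π) * Real.arctan (x / Real.sqrt (1 - 2 * x ^ 2))
      - 2 / (5 * π) * Real.arctan (3 * x / (2 * Real.sqrt (1 - 2 * x ^ 2))))
      (nhdsWithin (-(1 / Real.sqrt 2)) (Ioi (-(1 / Real.sqrt 2)))) (nhds (-(1 / 10))) := by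
  set a : ℝ := 1 / Real.sqrt 2 with ha
  have ha0 : 0 < a := wojcik_a_pos
  have hinv : Tendsto (fun x : ℝ => (Real.sqrt (1 - 2 * x ^ 2))⁻¹)
      (nhdsWithin (-a) (Ioi (-a))) atTop := tendsto_inv_nhdsGT_zero.comp wojcik_tendsto_sqrt_bot
  have hid : Tendsto (fun x : ℝ => x) (nhdsWithin (-a) (Ioi (-a))) (nhds (-a)) :=
    tendsto_id.mono_right nhdsWithin_le_nhds
  have h1 : Tendsto (fun x : ℝ => x / Real.sqrt (1 - 2 * x ^ 2))
      (nhdsWithin (-a) (Ioi (-a))) atBot := by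
    have := Filter.Tendsto.neg_mul_atTop (by linarith : -a < 0) hid hinv
    simpa [div_eq_mul_inv] using this
  have h2 : Tendsto (fun x : ℝ => 3 * x / (2 * Real.sqrt (1 - 2 * x ^ 2)))
      (nhdsWithin (-a) (Ioi (-a))) atBot := by
    have hid2 : Tendsto (fun x : ℝ => 3 * x / 2) (nhdsWithin (-a) (Ioi (-a)))
        (nhds (3 * (-a) / 2)) := (hid.const_mul 3).div_const 2
    have := Filter.Tendsto.neg_mul_atTop (by linarith : 3 * (-a) / 2 < 0) hid2 hinv
    apply this.congr
    intro x
    ring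
  have harc1 : Tendsto (fun x : ℝ => Real.arctan (x / Real.sqrt (1 - 2 * x ^ 2)))
      (nhdsWithin (-a) (Ioi (-a))) (nhds (-(π / 2))) :=
    (tendsto_nhds_of_tendsto_nhdsWithin Real.tendsto_arctan_atBot).comp h1
  have harc2 : Tendsto (fun x : ℝ => Real.arctan (3 * x / (2 * Real.sqrt (1 - 2 * x ^ 2))))
      (nhdsWithin (-a) (Ioi (-a))) (nhds (-(π / 2))) :=
    (tendsto_nhds_of_tendsto_nhdsWithin Real.tendsto_arctan_atBot).comp h2
  have := ((harc1.const_mul (3 / (5 * π))).sub (harc2.const_mul (2 / (5 * π))))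
  have hval : 3 / (5 * π) * (-(π / 2)) - 2 / (5 * π) * (-(π / 2)) = -(1 / 10) := by
    have hpi : π ≠ 0 := Real.pi_ne_zero
    field_simp
    ring
  rwa [hval] at this

theorem wojcik_symmetric_weight_integral :
    ∫ x in (-(1 / Real.sqrt 2))..(1 / Real.sqrt 2),
      (3 * x^2 / (4 + x^2)) * (1 / (π * (1 - x^2) * Real.sqrt (1 - 2 * x^2))) = 1 / 5 := by
  have ha0 : 0 < 1 / Real.sqrt 2 := wojcik_a_pos
  have ha2 : (1 / Real.sqrt 2) ^ 2 = 1 / 2 := wojcik_a_sq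
  have hint : IntervalIntegrable (fun x : ℝ =>
      (3 * x^2 / (4 + x^2)) * (1 / (π * (1 - x^2) * Real.sqrt (1 - 2 * x^2))))
      volume (-(1 / Real.sqrt 2)) (1 / Real.sqrt 2) := by
    have hr := wojcik_integrable_right
    have hl := (IntervalIntegrable.iff_comp_neg (h := enorm_ne_top)).mp hr
    have heven : (fun x : ℝ =>
        (3 * (-x)^2 / (4 + (-x)^2)) * (1 / (π * (1 - (-x)^2) * Real.sqrt (1 - 2 * (-x)^2))))
        = (fun x : ℝ =>
        (3 * x^2 / (4 + x^2)) * (1 / (π * (1 - x^2) * Real.sqrt (1 - 2 * x^2)))) := by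
      funext x; rw [neg_pow]; norm_num
    rw [heven, neg_zero] at hl
    exact hl.symm.trans hr
  have hderiv : ∀ x ∈ Ioo (-(1 / Real.sqrt 2)) (1 / Real.sqrt 2),
      HasDerivAt (fun x : ℝ => 3 / (5 * π) * Real.arctan (x / Real.sqrt (1 - 2 * x ^ 2))
        - 2 / (5 * π) * Real.arctan (3 * x / (2 * Real.sqrt (1 - 2 * x ^ 2))))
        ((3 * x^2 / (4 + x^2)) * (1 / (π * (1 - x^2) * Real.sqrt (1 - 2 * x^2)))) x := by
    intro x hx
    apply Wfn_deriv
    nlinarith [hx.1, hx.2, ha2]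
  have := intervalIntegral.integral_eq_sub_of_hasDerivAt_of_tendsto
    (by linarith : -(1 / Real.sqrt 2) < 1 / Real.sqrt 2) hderiv hint wojcik_Wfn_bot wojcik_Wfn_top
  rw [this]
  norm_num
end

section
/- Let C = 4/5 and w(x) = 3x²/(4+x²), f_K(x) = 1/(π(1−x²)√(1−2x²)) on (−1/√2,1/√2). Then the measure μ = C δ_0 + w(x)f_K(x)dx is a probability measure: C + ∫_{−1/√2}^{1/√2} w(x)f_K(x) dx = 1. -/
open Real Set Filter MeasureTheory intervalIntegral
open scoped Topology

noncomputable def gW (x : ℝ) : ℝ :=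
  3 * x ^ 2 / (4 + x ^ 2) * (1 / (π * (1 - x ^ 2) * Real.sqrt (1 - 2 * x ^ 2)))

noncomputable def FW (x : ℝ) : ℝ :=
  3 / (5 * π) * Real.arctan (x / Real.sqrt (1 - 2 * x ^ 2)) -
    2 / (5 * π) * Real.arctan (3 * x / (2 * Real.sqrt (1 - 2 * x ^ 2)))

noncomputable def c0 : ℝ := 1 / Real.sqrt 2

noncomputable def GW (x : ℝ) : ℝ :=
  if c0 ≤ x then 1 / 10 else if x ≤ -c0 then -(1 / 10) else FW x

lemma c0_pos : 0 < c0 := by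
  have : (0:ℝ) < Real.sqrt 2 := Real.sqrt_pos.mpr (by norm_num)
  simpa [c0] using one_div_pos.mpr this

lemma c0_sq : c0 ^ 2 = 1 / 2 := by
  have h2 : (0:ℝ) ≤ 2 := by norm_num
  simp [c0, div_pow, Real.sq_sqrt h2]

lemma c0_lt_one : c0 < 1 := by
  nlinarith [c0_sq, c0_pos]

lemma sub_sq_pos {x : ℝ} (hx : x ∈ Set.Ioo (-c0) c0) : 0 < 1 - 2 * x ^ 2 := by
  have h := sq_lt_sq' hx.1 hx.2
  rw [c0_sq] at h
  nlinarith

lemma sW_pos {x : ℝ} (hx : x ∈ Set.Ioo (-c0) c0) : 0 < Real.sqrt (1 - 2 * x ^ 2) :=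
  Real.sqrt_pos.mpr (sub_sq_pos hx)

lemma FW_deriv {x : ℝ} (hx : x ∈ Set.Ioo (-c0) c0) : HasDerivAt FW (gW x) x := by
  have hpos := sub_sq_pos hx
  have hs := sW_pos hx
  set s := Real.sqrt (1 - 2 * x ^ 2) with hsdef
  have hs2 : s ^ 2 = 1 - 2 * x ^ 2 := Real.sq_sqrt hpos.le
  have hs0 : s ≠ 0 := ne_of_gt hs
  have hx2 : x ^ 2 < 1 / 2 := by nlinarith
  have h1x : (1 : ℝ) - x ^ 2 ≠ 0 := by nlinarith
  have h4x : (4 : ℝ) + x ^ 2 ≠ 0 := by positivity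
  have h1 : HasDerivAt (fun y : ℝ => 1 - 2 * y ^ 2) (-(4 * x)) x := by
    have := ((hasDerivAt_pow 2 x).const_mul (2:ℝ)).const_sub 1
    exact this.congr_deriv (by norm_num; ring)
  have hsq : HasDerivAt (fun y : ℝ => Real.sqrt (1 - 2 * y ^ 2))
      (-(4 * x) / (2 * s)) x := h1.sqrt (ne_of_gt hpos)
  have hq1 : HasDerivAt (fun y : ℝ => y / Real.sqrt (1 - 2 * y ^ 2))
      ((1 * s - x * (-(4 * x) / (2 * s))) / s ^ 2) x :=
    (hasDerivAt_id x).div hsq hs0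
  have ha1 := hq1.arctan
  have hnum : HasDerivAt (fun y : ℝ => 3 * y) 3 x := by
    simpa using (hasDerivAt_id x).const_mul (3:ℝ)
  have hden : HasDerivAt (fun y : ℝ => 2 * Real.sqrt (1 - 2 * y ^ 2))
      (2 * (-(4 * x) / (2 * s))) x := hsq.const_mul 2
  have hq2 : HasDerivAt (fun y : ℝ => 3 * y / (2 * Real.sqrt (1 - 2 * y ^ 2)))
      ((3 * (2 * s) - 3 * x * (2 * (-(4 * x) / (2 * s)))) / (2 * s) ^ 2) x :=
    hnum.div hden (by positivity)
  have ha2 := hq2.arctan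
  have hF := (ha1.const_mul (3 / (5 * π))).sub (ha2.const_mul (2 / (5 * π)))
  refine hF.congr_deriv ?_
  have hd1 : (1 : ℝ) + (x / s) ^ 2 ≠ 0 := by positivity
  have hd2 : (1 : ℝ) + (3 * x / (2 * s)) ^ 2 ≠ 0 := by positivity
  have hπ : π ≠ 0 := Real.pi_ne_zero
  simp only [gW, ← hsdef]
  field_simp
  linear_combination (-10 * x ^ 2 * (4 * s ^ 2 + x ^ 4 + 8 * x ^ 2)) * hs2

lemma sqrt_tendsto_zero_top :
    Tendsto (fun x : ℝ => Real.sqrt (1 - 2 * x ^ 2)) (𝓝[<] c0) (𝓝[>] 0) := by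
  have hcont : Tendsto (fun x : ℝ => Real.sqrt (1 - 2 * x ^ 2)) (𝓝 c0) (𝓝 0) := by
    have h : Continuous (fun x : ℝ => Real.sqrt (1 - 2 * x ^ 2)) := by
      continuity
    have := h.tendsto c0
    have hz : Real.sqrt (1 - 2 * c0 ^ 2) = 0 := by
      rw [c0_sq]; norm_num
    rwa [hz] at this
  have hmem : Set.Ioo (-c0) c0 ∈ 𝓝[<] c0 :=
    Ioo_mem_nhdsLT_of_mem ⟨by linarith [c0_pos], le_refl c0⟩
  refine tendsto_nhdsWithin_of_tendsto_nhds_of_eventually_within _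
    (hcont.mono_left nhdsWithin_le_nhds) ?_
  exact Filter.mem_of_superset hmem fun x hx => sW_pos hx

lemma sqrt_tendsto_zero_bot :
    Tendsto (fun x : ℝ => Real.sqrt (1 - 2 * x ^ 2)) (𝓝[>] (-c0)) (𝓝[>] 0) := by
  have hcont : Tendsto (fun x : ℝ => Real.sqrt (1 - 2 * x ^ 2)) (𝓝 (-c0)) (𝓝 0) := by
    have h : Continuous (fun x : ℝ => Real.sqrt (1 - 2 * x ^ 2)) := by
      continuity
    have := h.tendsto (-c0)
    have hz : Real.sqrt (1 - 2 * (-c0) ^ 2) = 0 := by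
      rw [neg_sq, c0_sq]; norm_num
    rwa [hz] at this
  have hmem : Set.Ioo (-c0) c0 ∈ 𝓝[>] (-c0) :=
    Ioo_mem_nhdsGT_of_mem ⟨le_refl (-c0), by linarith [c0_pos]⟩
  refine tendsto_nhdsWithin_of_tendsto_nhds_of_eventually_within _
    (hcont.mono_left nhdsWithin_le_nhds) ?_
  exact Filter.mem_of_superset hmem fun x hx => sW_pos hx

lemma q1_tendsto_top :
    Tendsto (fun x : ℝ => x / Real.sqrt (1 - 2 * x ^ 2)) (𝓝[<] c0) atTop := by
  have hinv : Tendsto (fun x : ℝ => (Real.sqrt (1 - 2 * x ^ 2))⁻¹) (𝓝[<] c0) atTop :=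
    sqrt_tendsto_zero_top.inv_tendsto_nhdsGT_zero
  have hx : Tendsto (fun x : ℝ => x) (𝓝[<] c0) (𝓝 c0) :=
    tendsto_id.mono_left nhdsWithin_le_nhds
  have := hx.pos_mul_atTop c0_pos hinv
  simpa [div_eq_mul_inv] using this

lemma q1_tendsto_bot :
    Tendsto (fun x : ℝ => x / Real.sqrt (1 - 2 * x ^ 2)) (𝓝[>] (-c0)) atBot := by
  have hinv : Tendsto (fun x : ℝ => (Real.sqrt (1 - 2 * x ^ 2))⁻¹) (𝓝[>] (-c0)) atTop :=
    sqrt_tendsto_zero_bot.inv_tendsto_nhdsGT_zero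
  have hx : Tendsto (fun x : ℝ => x) (𝓝[>] (-c0)) (𝓝 (-c0)) :=
    tendsto_id.mono_left nhdsWithin_le_nhds
  have := hx.neg_mul_atTop (by linarith [c0_pos] : -c0 < 0) hinv
  simpa [div_eq_mul_inv] using this

lemma q2_eq : (fun x : ℝ => 3 * x / (2 * Real.sqrt (1 - 2 * x ^ 2))) =
    fun x : ℝ => (3 / 2) * (x / Real.sqrt (1 - 2 * x ^ 2)) := by
  funext x; ring

lemma tendsto_FW_top : Tendsto FW (𝓝[<] c0) (𝓝 (1 / 10)) := by
  have ha1 : Tendsto (fun x : ℝ => Real.arctan (x / Real.sqrt (1 - 2 * x ^ 2)))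
      (𝓝[<] c0) (𝓝 (π / 2)) :=
    (tendsto_nhds_of_tendsto_nhdsWithin Real.tendsto_arctan_atTop).comp q1_tendsto_top
  have hq2 : Tendsto (fun x : ℝ => 3 * x / (2 * Real.sqrt (1 - 2 * x ^ 2))) (𝓝[<] c0) atTop := by
    rw [q2_eq]
    exact q1_tendsto_top.const_mul_atTop (by norm_num)
  have ha2 : Tendsto (fun x : ℝ => Real.arctan (3 * x / (2 * Real.sqrt (1 - 2 * x ^ 2))))
      (𝓝[<] c0) (𝓝 (π / 2)) :=
    (tendsto_nhds_of_tendsto_nhdsWithin Real.tendsto_arctan_atTop).comp hq2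
  have h := ((ha1.const_mul (3 / (5 * π))).sub (ha2.const_mul (2 / (5 * π))))
  have hval : 3 / (5 * π) * (π / 2) - 2 / (5 * π) * (π / 2) = 1 / 10 := by
    have hπ : π ≠ 0 := Real.pi_ne_zero
    field_simp
    ring
  rw [hval] at h
  exact h

lemma tendsto_FW_bot : Tendsto FW (𝓝[>] (-c0)) (𝓝 (-(1 / 10))) := by
  have ha1 : Tendsto (fun x : ℝ => Real.arctan (x / Real.sqrt (1 - 2 * x ^ 2)))
      (𝓝[>] (-c0)) (𝓝 (-(π / 2))) :=
    (tendsto_nhds_of_tendsto_nhdsWithin Real.tendsto_arctan_atBot).comp q1_tendsto_bot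
  have hq2 : Tendsto (fun x : ℝ => 3 * x / (2 * Real.sqrt (1 - 2 * x ^ 2))) (𝓝[>] (-c0)) atBot := by
    rw [q2_eq]
    exact q1_tendsto_bot.const_mul_atBot (by norm_num)
  have ha2 : Tendsto (fun x : ℝ => Real.arctan (3 * x / (2 * Real.sqrt (1 - 2 * x ^ 2))))
      (𝓝[>] (-c0)) (𝓝 (-(π / 2))) :=
    (tendsto_nhds_of_tendsto_nhdsWithin Real.tendsto_arctan_atBot).comp hq2
  have h := ((ha1.const_mul (3 / (5 * π))).sub (ha2.const_mul (2 / (5 * π))))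
  have hval : 3 / (5 * π) * (-(π / 2)) - 2 / (5 * π) * (-(π / 2)) = -(1 / 10) := by
    have hπ : π ≠ 0 := Real.pi_ne_zero
    field_simp
    ring
  rw [hval] at h
  exact h

lemma sqrt2_mul_c0 : Real.sqrt 2 * c0 = 1 := by
  have h : Real.sqrt 2 ≠ 0 := by positivity
  unfold c0
  field_simp

lemma gW_meas : Measurable gW := by
  unfold gW
  fun_prop

lemma gW_int_right : IntervalIntegrable gW volume 0 c0 := by
  rw [intervalIntegrable_iff_integrableOn_Ioc_of_le c0_pos.le,
    integrableOn_Ioc_iff_integrableOn_Ioo]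
  have hBint : IntegrableOn (fun x : ℝ => 3 / (4 * π) * (c0 - x) ^ (-(1 / 2) : ℝ))
      (Set.Ioo 0 c0) volume := by
    have h0 : IntervalIntegrable (fun x : ℝ => x ^ (-(1 / 2) : ℝ)) volume 0 c0 :=
      intervalIntegrable_rpow' (by norm_num)
    have h1 : IntervalIntegrable (fun x : ℝ => (c0 - x) ^ (-(1 / 2) : ℝ)) volume 0 c0 := by
      have := h0.comp_sub_left c0
      simpa using this.symm
    have h2 := h1.const_mul (3 / (4 * π))
    have h3 := (intervalIntegrable_iff_integrableOn_Ioc_of_le c0_pos.le).mp h2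
    exact (integrableOn_Ioc_iff_integrableOn_Ioo).mp h3
  refine Integrable.mono hBint gW_meas.aestronglyMeasurable.restrict ?_
  rw [ae_restrict_iff' measurableSet_Ioo]
  refine Filter.Eventually.of_forall fun x hx => ?_
  have hx0 : 0 < x := hx.1
  have hxc : x < c0 := hx.2
  have hxo : x ∈ Set.Ioo (-c0) c0 := ⟨by linarith [c0_pos], hxc⟩
  have hx2 : x ^ 2 < 1 / 2 := by
    have h := sq_lt_sq' hxo.1 hxo.2
    rw [c0_sq] at h; exact h
  have h1x : (0:ℝ) < 1 - x ^ 2 := by nlinarith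
  have hs := sW_pos hxo
  set s := Real.sqrt (1 - 2 * x ^ 2) with hsdef
  have hu0 : 0 < c0 - x := by linarith
  have hr2 : Real.sqrt 2 ^ 2 = 2 := Real.sq_sqrt (by norm_num)
  have hr1 : 1 ≤ Real.sqrt 2 := by nlinarith [Real.sqrt_nonneg 2]
  have hrc : Real.sqrt 2 * c0 = 1 := sqrt2_mul_c0
  have hrx : Real.sqrt 2 * x ≤ 1 := by nlinarith
  have hr2x : (Real.sqrt 2 * x) ^ 2 = 2 * x ^ 2 := by rw [mul_pow, hr2]
  have key : c0 - x ≤ 1 - 2 * x ^ 2 := by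
    nlinarith [mul_nonneg (sub_nonneg.mpr hrx) (mul_nonneg (Real.sqrt_nonneg 2) hx0.le),
      mul_nonneg (by linarith : (0:ℝ) ≤ Real.sqrt 2 - 1) hu0.le]
  set u := Real.sqrt (c0 - x) with hudef
  have hu : 0 < u := Real.sqrt_pos.mpr hu0
  have hsu : u ≤ s := Real.sqrt_le_sqrt key
  have hrpow : (c0 - x) ^ (-(1 / 2) : ℝ) = u⁻¹ := by
    rw [hudef, Real.sqrt_eq_rpow, ← Real.rpow_neg hu0.le]
  have hgnn : 0 ≤ gW x := by
    unfold gW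
    have : 0 < π * (1 - x ^ 2) * s := by
      exact mul_pos (mul_pos Real.pi_pos h1x) hs
    positivity
  have hB : gW x ≤ 3 / (4 * π) * (c0 - x) ^ (-(1 / 2) : ℝ) := by
    rw [hrpow]
    have hgW : gW x = 3 * x ^ 2 / ((4 + x ^ 2) * (π * (1 - x ^ 2) * s)) := by
      unfold gW
      rw [div_mul_div_comm, mul_one]
    have hRHS : 3 / (4 * π) * u⁻¹ = 3 / (4 * π * u) := by
      field_simp
    rw [hgW, hRHS, div_le_div_iff₀ (by positivity) (by positivity)]
    have h4 : 4 * x ^ 2 ≤ (4 + x ^ 2) * (1 - x ^ 2) := by nlinarith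
    have hπ := Real.pi_pos
    nlinarith [mul_le_mul_of_nonneg_right h4 (by positivity : (0:ℝ) ≤ π * u),
      mul_le_mul_of_nonneg_left hsu
        (mul_nonneg (mul_nonneg (by positivity : (0:ℝ) ≤ 3 * π)
          (by positivity : (0:ℝ) ≤ 4 + x ^ 2)) h1x.le)]
  have hBnn : 0 ≤ 3 / (4 * π) * (c0 - x) ^ (-(1 / 2) : ℝ) := by
    rw [hrpow]; positivity
  rw [Real.norm_eq_abs, Real.norm_eq_abs, abs_of_nonneg hgnn, abs_of_nonneg hBnn]
  exact hB

lemma gW_even (x : ℝ) : gW (-x) = gW x := by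
  simp [gW, neg_sq]

lemma gW_int : IntervalIntegrable gW volume (-c0) c0 := by
  have hr := gW_int_right
  have hl : IntervalIntegrable gW volume (-c0) 0 := by
    have h := (IntervalIntegrable.iff_comp_neg).mp hr
    have h2 : (fun x : ℝ => gW (-x)) = gW := funext fun x => gW_even x
    rw [h2] at h
    simpa using h.symm
  exact hl.trans hr

lemma GW_eq_FW {x : ℝ} (hx : x ∈ Set.Ioo (-c0) c0) : GW x = FW x := by
  have h1 : ¬ c0 ≤ x := not_le.mpr hx.2
  have h2 : ¬ x ≤ -c0 := not_le.mpr hx.1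
  simp [GW, h1, h2]

lemma GW_tendsto_top : Tendsto GW (𝓝[<] c0) (𝓝 (1 / 10)) := by
  have hmem : Set.Ioo (-c0) c0 ∈ 𝓝[<] c0 :=
    Ioo_mem_nhdsLT_of_mem ⟨by linarith [c0_pos], le_refl c0⟩
  refine tendsto_FW_top.congr' ?_
  exact Filter.eventuallyEq_of_mem hmem fun y hy => (GW_eq_FW hy).symm

lemma GW_tendsto_bot : Tendsto GW (𝓝[>] (-c0)) (𝓝 (-(1 / 10))) := by
  have hmem : Set.Ioo (-c0) c0 ∈ 𝓝[>] (-c0) :=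
    Ioo_mem_nhdsGT_of_mem ⟨le_refl (-c0), by linarith [c0_pos]⟩
  refine tendsto_FW_bot.congr' ?_
  exact Filter.eventuallyEq_of_mem hmem fun y hy => (GW_eq_FW hy).symm

lemma GW_contOn : ContinuousOn GW (Set.Icc (-c0) c0) := by
  intro x hx
  rcases eq_or_lt_of_le hx.1 with h1 | h1
  · -- x = -c0
    subst h1
    have hsub : Set.Icc (-c0) c0 ⊆ Set.Ioi (-c0) ∪ {-c0} := by
      intro y hy
      rcases eq_or_lt_of_le hy.1 with h | h
      · exact Or.inr (by simp [← h])
      · exact Or.inl h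
    have hle : 𝓝[Set.Icc (-c0) c0] (-c0) ≤ 𝓝[>] (-c0) ⊔ pure (-c0) := by
      refine le_trans (nhdsWithin_mono _ hsub) ?_
      rw [nhdsWithin_union, nhdsWithin_singleton]
    have hGmc : GW (-c0) = -(1 / 10) := by
      have h1 : ¬ c0 ≤ -c0 := by linarith [c0_pos]
      simp [GW, h1]
    have hpure : Tendsto GW (pure (-c0)) (𝓝 (-(1 / 10))) := by
      rw [← hGmc]
      exact tendsto_pure_nhds GW (-c0)
    have : Tendsto GW (𝓝[>] (-c0) ⊔ pure (-c0)) (𝓝 (-(1 / 10))) :=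
      tendsto_sup.mpr ⟨GW_tendsto_bot, hpure⟩
    have := this.mono_left hle
    unfold ContinuousWithinAt
    rwa [hGmc]
  · rcases eq_or_lt_of_le hx.2 with h2 | h2
    · -- x = c0
      subst h2
      have hsub : Set.Icc (-c0) c0 ⊆ Set.Iio c0 ∪ {c0} := by
        intro y hy
        rcases eq_or_lt_of_le hy.2 with h | h
        · exact Or.inr (by simp [h])
        · exact Or.inl h
      have hle : 𝓝[Set.Icc (-c0) c0] c0 ≤ 𝓝[<] c0 ⊔ pure c0 := by
        refine le_trans (nhdsWithin_mono _ hsub) ?_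
        rw [nhdsWithin_union, nhdsWithin_singleton]
      have hGc : GW c0 = 1 / 10 := by simp [GW]
      have hpure : Tendsto GW (pure c0) (𝓝 (1 / 10)) := by
        rw [← hGc]
        exact tendsto_pure_nhds GW c0
      have : Tendsto GW (𝓝[<] c0 ⊔ pure c0) (𝓝 (1 / 10)) :=
        tendsto_sup.mpr ⟨GW_tendsto_top, hpure⟩
      have := this.mono_left hle
      unfold ContinuousWithinAt
      rwa [hGc]
    · -- interior
      have hxo : x ∈ Set.Ioo (-c0) c0 := ⟨h1, h2⟩
      have hGF : FW =ᶠ[𝓝 x] GW :=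
        Filter.eventuallyEq_of_mem (isOpen_Ioo.mem_nhds hxo) (fun y hy => (GW_eq_FW hy).symm)
      exact (((FW_deriv hxo).continuousAt).congr hGF).continuousWithinAt

theorem wojcik_weak_limit_probability_measure :
    (4 / 5 : ℝ) + ∫ x in (-(1 / Real.sqrt 2))..(1 / Real.sqrt 2),
      (3 * x ^ 2 / (4 + x ^ 2)) * (1 / (π * (1 - x ^ 2) * Real.sqrt (1 - 2 * x ^ 2))) = 1 := by
  have hab : -c0 ≤ c0 := by linarith [c0_pos]
  have hderiv : ∀ x ∈ Set.Ioo (-c0) c0, HasDerivWithinAt GW (gW x) (Set.Ioi x) x := by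
    intro x hx
    have hGF : GW =ᶠ[𝓝 x] FW :=
      Filter.eventuallyEq_of_mem (isOpen_Ioo.mem_nhds hx) (fun y hy => GW_eq_FW hy)
    exact (((FW_deriv hx).congr_of_eventuallyEq hGF)).hasDerivWithinAt
  have key : (∫ x in (-c0)..c0, gW x) = GW c0 - GW (-c0) :=
    intervalIntegral.integral_eq_sub_of_hasDeriv_right_of_le hab GW_contOn hderiv gW_int
  have hGc : GW c0 = 1 / 10 := by simp [GW]
  have hGmc : GW (-c0) = -(1 / 10) := by
    have h1 : ¬ c0 ≤ -c0 := by linarith [c0_pos]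
    simp [GW, h1]
  have : (∫ x in (-c0)..c0, gW x) = 1 / 5 := by
    rw [key, hGc, hGmc]; norm_num
  calc (4 / 5 : ℝ) + ∫ x in (-(1 / Real.sqrt 2))..(1 / Real.sqrt 2),
      (3 * x ^ 2 / (4 + x ^ 2)) * (1 / (π * (1 - x ^ 2) * Real.sqrt (1 - 2 * x ^ 2)))
      = 4 / 5 + ∫ x in (-c0)..c0, gW x := by rfl
    _ = 1 := by rw [this]; norm_num
end

section
/- Let g(x) = x^5 and h(x) = x^4 restricted to (−1/√2, 1/√2), and f_K(x) = 1/(π(1−x²)√(1−2x²)). Then ∫_{−1/√2}^{1/√2} x² f_K(x) dx = 1 − 1/√2. -/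
open Real

noncomputable def konnoF (x : ℝ) : ℝ :=
  (Real.arcsin (x / Real.sqrt (1 - x ^ 2))
    - (1 / Real.sqrt 2) * Real.arcsin (Real.sqrt 2 * x)) / π

lemma konnoF_hasDerivAt {x : ℝ} (hx : x ∈ Set.Ioo (-(1 / Real.sqrt 2)) (1 / Real.sqrt 2)) :
    HasDerivAt konnoF (x ^ 2 * (1 / (π * (1 - x ^ 2) * Real.sqrt (1 - 2 * x ^ 2)))) x := by
  obtain ⟨h1, h2⟩ := hx
  have hs2 : (0:ℝ) < Real.sqrt 2 := by positivity
  have hx2 : x ^ 2 < 1 / 2 := by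
    have := abs_lt.2 ⟨h1, h2⟩
    have h := sq_lt_sq' h1 h2
    rw [div_pow, one_pow, Real.sq_sqrt (by norm_num : (2:ℝ) ≥ 0)] at h
    linarith
  have hq : (0:ℝ) < 1 - 2 * x ^ 2 := by linarith
  have hp : (0:ℝ) < 1 - x ^ 2 := by nlinarith
  have hs : (0:ℝ) < Real.sqrt (1 - x ^ 2) := Real.sqrt_pos.2 hp
  have hsq : (0:ℝ) < Real.sqrt (1 - 2 * x ^ 2) := Real.sqrt_pos.2 hq
  have hss : Real.sqrt (1 - x ^ 2) ^ 2 = 1 - x ^ 2 := Real.sq_sqrt hp.le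
  -- derivative of the inner function x / sqrt (1 - x^2)
  have hsder : HasDerivAt (fun y : ℝ => Real.sqrt (1 - y ^ 2))
      (1 / (2 * Real.sqrt (1 - x ^ 2)) * -(2 * x)) x := by
    have hinner : HasDerivAt (fun y : ℝ => 1 - y ^ 2) (-(2 * x)) x := by
      simpa using ((hasDerivAt_pow 2 x).const_sub 1)
    exact (Real.hasDerivAt_sqrt hp.ne').comp x hinner
  have huder : HasDerivAt (fun y : ℝ => y / Real.sqrt (1 - y ^ 2))
      ((1 * Real.sqrt (1 - x ^ 2) - x * (1 / (2 * Real.sqrt (1 - x ^ 2)) * -(2 * x)))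
        / Real.sqrt (1 - x ^ 2) ^ 2) x :=
    (hasDerivAt_id x).div hsder hs.ne'
  set u : ℝ := x / Real.sqrt (1 - x ^ 2) with hu
  have hu2 : u ^ 2 = x ^ 2 / (1 - x ^ 2) := by
    rw [hu, div_pow, hss]
  have hult : u ^ 2 < 1 := by
    rw [hu2, div_lt_one hp]; nlinarith
  have hune : u ≠ 1 := by
    intro h; rw [h] at hult; norm_num at hult
  have hune' : u ≠ -1 := by
    intro h; rw [h] at hult; norm_num at hult
  have harc1 : HasDerivAt (fun y : ℝ => Real.arcsin (y / Real.sqrt (1 - y ^ 2)))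
      ((1 / Real.sqrt (1 - u ^ 2)) *
        ((1 * Real.sqrt (1 - x ^ 2) - x * (1 / (2 * Real.sqrt (1 - x ^ 2)) * -(2 * x)))
          / Real.sqrt (1 - x ^ 2) ^ 2)) x :=
    by
      have h := (Real.hasDerivAt_arcsin hune' hune)
      exact h.comp x huder
  have h2x : (Real.sqrt 2 * x) ^ 2 < 1 := by
    rw [mul_pow, Real.sq_sqrt (by norm_num : (0:ℝ) ≤ 2)]; linarith
  have h2ne : Real.sqrt 2 * x ≠ 1 := by
    intro h; rw [h] at h2x; norm_num at h2x
  have h2ne' : Real.sqrt 2 * x ≠ -1 := by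
    intro h; rw [h] at h2x; norm_num at h2x
  have harc2 : HasDerivAt (fun y : ℝ => Real.arcsin (Real.sqrt 2 * y))
      ((1 / Real.sqrt (1 - (Real.sqrt 2 * x) ^ 2)) * Real.sqrt 2) x := by
    have hlin : HasDerivAt (fun y : ℝ => Real.sqrt 2 * y) (Real.sqrt 2) x := by
      simpa using (hasDerivAt_id x).const_mul (Real.sqrt 2)
    exact (Real.hasDerivAt_arcsin h2ne' h2ne).comp x hlin
  have hG : HasDerivAt konnoF
      (((1 / Real.sqrt (1 - u ^ 2)) *
        ((1 * Real.sqrt (1 - x ^ 2) - x * (1 / (2 * Real.sqrt (1 - x ^ 2)) * -(2 * x)))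
          / Real.sqrt (1 - x ^ 2) ^ 2)
        - (1 / Real.sqrt 2) * ((1 / Real.sqrt (1 - (Real.sqrt 2 * x) ^ 2)) * Real.sqrt 2)) / π)
      x := by
    exact ((harc1.sub ((harc2.const_mul (1 / Real.sqrt 2)))).div_const π)
  convert hG using 1
  have h1u : 1 - u ^ 2 = (1 - 2 * x ^ 2) / (1 - x ^ 2) := by
    rw [hu2]; field_simp; ring
  have hsqu : Real.sqrt (1 - u ^ 2) = Real.sqrt (1 - 2 * x ^ 2) / Real.sqrt (1 - x ^ 2) := by
    rw [h1u, Real.sqrt_div hq.le]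
  have h2xs : Real.sqrt (1 - (Real.sqrt 2 * x) ^ 2) = Real.sqrt (1 - 2 * x ^ 2) := by
    rw [mul_pow, Real.sq_sqrt (by norm_num : (0:ℝ) ≤ 2)]
  rw [hsqu, h2xs, hss]
  have hpi : π ≠ 0 := Real.pi_ne_zero
  have h2s : Real.sqrt 2 ≠ 0 := hs2.ne'
  field_simp
  rw [hss]
  ring

theorem konno_second_moment_hadamard :
    ∫ x in (-(1 / Real.sqrt 2))..(1 / Real.sqrt 2),
      x ^ 2 * (1 / (π * (1 - x ^ 2) * Real.sqrt (1 - 2 * x ^ 2))) = 1 - 1 / Real.sqrt 2 := by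
  have hs2 : (0:ℝ) < Real.sqrt 2 := by positivity
  have hab : -(1 / Real.sqrt 2) ≤ 1 / Real.sqrt 2 := by
    have : (0:ℝ) < 1 / Real.sqrt 2 := by positivity
    linarith
  have hcont : ContinuousOn konnoF (Set.Icc (-(1 / Real.sqrt 2)) (1 / Real.sqrt 2)) := by
    apply ContinuousOn.div_const
    apply ContinuousOn.sub
    · apply Real.continuous_arcsin.comp_continuousOn
      apply ContinuousOn.div continuousOn_id
      · exact (Real.continuous_sqrt.comp (by continuity)).continuousOn
      · intro x hx
        have hx2 : x ^ 2 ≤ 1 / 2 := by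
          have h := sq_le_sq' hx.1 hx.2
          rw [div_pow, one_pow, Real.sq_sqrt (by norm_num : (0:ℝ) ≤ 2)] at h
          linarith
        have : (0:ℝ) < 1 - x ^ 2 := by nlinarith
        exact (Real.sqrt_pos.2 this).ne'
    · exact (continuous_const.mul
        (Real.continuous_arcsin.comp (continuous_const.mul continuous_id))).continuousOn
  have hderiv : ∀ x ∈ Set.Ioo (-(1 / Real.sqrt 2)) (1 / Real.sqrt 2),
      HasDerivAt konnoF (x ^ 2 * (1 / (π * (1 - x ^ 2) * Real.sqrt (1 - 2 * x ^ 2)))) x :=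
    fun x hx => konnoF_hasDerivAt hx
  have hpos : ∀ x ∈ Set.Ioo (-(1 / Real.sqrt 2)) (1 / Real.sqrt 2),
      0 ≤ x ^ 2 * (1 / (π * (1 - x ^ 2) * Real.sqrt (1 - 2 * x ^ 2))) := by
    intro x hx
    have hx2 : x ^ 2 < 1 / 2 := by
      have h := sq_lt_sq' hx.1 hx.2
      rw [div_pow, one_pow, Real.sq_sqrt (by norm_num : (0:ℝ) ≤ 2)] at h
      linarith
    have hp : (0:ℝ) < 1 - x ^ 2 := by nlinarith
    have hq : (0:ℝ) < 1 - 2 * x ^ 2 := by linarith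
    have : (0:ℝ) < π * (1 - x ^ 2) * Real.sqrt (1 - 2 * x ^ 2) :=
      mul_pos (mul_pos Real.pi_pos hp) (Real.sqrt_pos.2 hq)
    positivity
  have hint : IntervalIntegrable
      (fun x => x ^ 2 * (1 / (π * (1 - x ^ 2) * Real.sqrt (1 - 2 * x ^ 2)))) MeasureTheory.volume
      (-(1 / Real.sqrt 2)) (1 / Real.sqrt 2) := by
    apply intervalIntegral.intervalIntegrable_deriv_of_nonneg
    · rwa [Set.uIcc_of_le hab]
    · rwa [min_eq_left hab, max_eq_right hab]
    · rwa [min_eq_left hab, max_eq_right hab]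
  have key := intervalIntegral.integral_eq_sub_of_hasDeriv_right_of_le hab hcont
    (fun x hx => (hderiv x hx).hasDerivWithinAt) hint
  rw [key]
  have ha2 : (1 / Real.sqrt 2) ^ 2 = 1 / 2 := by
    rw [div_pow, one_pow, Real.sq_sqrt (by norm_num : (0:ℝ) ≤ 2)]
  have hhalf : Real.sqrt (1 - (1 / Real.sqrt 2) ^ 2) = 1 / Real.sqrt 2 := by
    rw [ha2]
    rw [show (1:ℝ) - 1 / 2 = 2⁻¹ by norm_num, Real.sqrt_inv, one_div]
  have hmul : Real.sqrt 2 * (1 / Real.sqrt 2) = 1 := by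
    field_simp
  unfold konnoF
  rw [hhalf]
  rw [show (-(1 / Real.sqrt 2)) ^ 2 = (1 / Real.sqrt 2) ^ 2 by ring, hhalf]
  rw [div_self (by positivity : (1 / Real.sqrt 2) ≠ 0), hmul]
  rw [show Real.sqrt 2 * -(1 / Real.sqrt 2) = -1 by rw [mul_neg, hmul]]
  rw [show (-(1 / Real.sqrt 2)) / (1 / Real.sqrt 2) = -1 by
    rw [neg_div, div_self (by positivity : (1 / Real.sqrt 2) ≠ 0)]]
  rw [Real.arcsin_one, Real.arcsin_neg_one]
  have hpi : π ≠ 0 := Real.pi_ne_zero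
  have h2s : Real.sqrt 2 ≠ 0 := hs2.ne'
  field_simp
  ring
end

section
/- For 0 < a < 1, the second moment of the Konno density satisfies ∫_{−a}^{a} x² · sqrt(1−a²)/(π(1−x²)√(a²−x²)) dx = 1 − √(1−a²). -/
open Real

set_option maxHeartbeats 2000000 in
theorem konno_second_moment (a : ℝ) (ha : 0 < a) (ha1 : a < 1) :
    ∫ x in (-a)..a,
      x ^ 2 * (Real.sqrt (1 - a ^ 2) / (π * (1 - x ^ 2) * Real.sqrt (a ^ 2 - x ^ 2)))
      = 1 - Real.sqrt (1 - a ^ 2) := by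
  set b := Real.sqrt (1 - a ^ 2) with hb
  have ha2 : a ^ 2 < 1 := by nlinarith
  have hb2 : b ^ 2 = 1 - a ^ 2 := Real.sq_sqrt (by nlinarith)
  have hbpos : 0 < b := Real.sqrt_pos.mpr (by nlinarith)
  set F : ℝ → ℝ := fun x =>
    (1 / π) * Real.arcsin (b * x / (a * Real.sqrt (1 - x ^ 2)))
      - (b / π) * Real.arcsin (x / a) with hF
  set f : ℝ → ℝ := fun x =>
    x ^ 2 * (b / (π * (1 - x ^ 2) * Real.sqrt (a ^ 2 - x ^ 2))) with hf
  have hx2le : ∀ x ∈ Set.Icc (-a) a, x ^ 2 ≤ a ^ 2 := by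
    intro x hx
    nlinarith [hx.1, hx.2]
  have hs_pos : ∀ x ∈ Set.Icc (-a) a, 0 < Real.sqrt (1 - x ^ 2) := by
    intro x hx
    exact Real.sqrt_pos.mpr (by nlinarith [hx2le x hx])
  -- continuity of F on Icc
  have hFc : ContinuousOn F (Set.Icc (-a) a) := by
    apply ContinuousOn.sub
    · apply ContinuousOn.mul continuousOn_const
      apply Real.continuous_arcsin.comp_continuousOn
      apply ContinuousOn.div (by fun_prop)
      · exact continuousOn_const.mul ((continuousOn_const.sub (continuousOn_pow 2)).sqrt)
      · intro x hx
        exact ne_of_gt (mul_pos ha (hs_pos x hx))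
    · exact continuousOn_const.mul
        (Real.continuous_arcsin.comp_continuousOn (by fun_prop))
  -- derivative of F on Ioo
  have hFd : ∀ x ∈ Set.Ioo (-a) a, HasDerivAt F (f x) x := by
    intro x hx
    have hx2 : x ^ 2 < a ^ 2 := by
      nlinarith [hx.1, hx.2]
    have h1x : 0 < 1 - x ^ 2 := by nlinarith
    have hax : 0 < a ^ 2 - x ^ 2 := by nlinarith
    set s := Real.sqrt (1 - x ^ 2) with hs
    set t := Real.sqrt (a ^ 2 - x ^ 2) with ht
    have hs2 : s ^ 2 = 1 - x ^ 2 := Real.sq_sqrt h1x.le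
    have ht2 : t ^ 2 = a ^ 2 - x ^ 2 := Real.sq_sqrt hax.le
    have hsp : 0 < s := Real.sqrt_pos.mpr h1x
    have htp : 0 < t := Real.sqrt_pos.mpr hax
    -- derivative of sqrt(1 - y^2)
    have hds : HasDerivAt (fun y : ℝ => Real.sqrt (1 - y ^ 2)) (-x / s) x := by
      have hin : HasDerivAt (fun y : ℝ => 1 - y ^ 2) (-(2 * x)) x := by
        simpa using (hasDerivAt_pow 2 x).const_sub 1
      have := hin.sqrt (ne_of_gt h1x)
      convert this using 1
      rw [← hs]
      field_simp
    -- derivative of g y = b y / (a sqrt(1-y^2))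
    have hdg : HasDerivAt (fun y : ℝ => b * y / (a * Real.sqrt (1 - y ^ 2)))
        (b / (a * s ^ 3)) x := by
      have htop : HasDerivAt (fun y : ℝ => b * y) b x := by
        simpa using (hasDerivAt_id x).const_mul b
      have hbot : HasDerivAt (fun y : ℝ => a * Real.sqrt (1 - y ^ 2)) (a * (-x / s)) x :=
        hds.const_mul a
      have this : HasDerivAt (fun y : ℝ => b * y / (a * Real.sqrt (1 - y ^ 2))) _ x := htop.div hbot (mul_pos ha hsp).ne'
      convert this using 1
      rw [← hs]
      field_simp
      linear_combination (-1 : ℝ) * hs2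
    have hglt : (b * x / (a * s)) ^ 2 < 1 := by
      rw [div_pow, div_lt_one (pow_pos (mul_pos ha hsp) 2)]
      nlinarith [hb2, hs2]
    have hd1 : HasDerivAt (fun y : ℝ => Real.arcsin (b * y / (a * Real.sqrt (1 - y ^ 2))))
        (1 / Real.sqrt (1 - (b * x / (a * s)) ^ 2) * (b / (a * s ^ 3))) x := by
      have h1 : (b * x / (a * s)) ≠ -1 := by
        intro h; rw [h] at hglt; norm_num at hglt
      have h2 : (b * x / (a * s)) ≠ 1 := by
        intro h; rw [h] at hglt; norm_num at hglt
      exact (Real.hasDerivAt_arcsin h1 h2).comp x hdg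
    have hsq1 : Real.sqrt (1 - (b * x / (a * s)) ^ 2) = t / (a * s) := by
      have : 1 - (b * x / (a * s)) ^ 2 = (t / (a * s)) ^ 2 := by
        field_simp
        nlinarith [hb2, hs2, ht2]
      rw [this, Real.sqrt_sq (div_nonneg htp.le (mul_pos ha hsp).le)]
    have hd2 : HasDerivAt (fun y : ℝ => Real.arcsin (y / a))
        (1 / Real.sqrt (1 - (x / a) ^ 2) * (1 / a)) x := by
      have hxa : (x / a) ^ 2 < 1 := by
        rw [div_pow, div_lt_one (by positivity)]; exact hx2
      have h1 : x / a ≠ -1 := by intro h; rw [h] at hxa; norm_num at hxa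
      have h2 : x / a ≠ 1 := by intro h; rw [h] at hxa; norm_num at hxa
      have hdiv : HasDerivAt (fun y : ℝ => y / a) (1 / a) x := by
        simpa using (hasDerivAt_id x).div_const a
      exact (Real.hasDerivAt_arcsin h1 h2).comp x hdiv
    have hsq2 : Real.sqrt (1 - (x / a) ^ 2) = t / a := by
      have : 1 - (x / a) ^ 2 = (t / a) ^ 2 := by
        field_simp
        nlinarith [ht2]
      rw [this, Real.sqrt_sq (div_nonneg htp.le ha.le)]
    have hcomb := (hd1.const_mul (1 / π)).sub (hd2.const_mul (b / π))
    have hπ : (0:ℝ) < π := Real.pi_pos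
    have heq : x ^ 2 * (b / (π * (1 - x ^ 2) * t)) =
        1 / π * (1 / Real.sqrt (1 - (b * x / (a * s)) ^ 2) * (b / (a * s ^ 3)))
          - b / π * (1 / Real.sqrt (1 - (x / a) ^ 2) * (1 / a)) := by
      rw [hsq1, hsq2]
      field_simp
      linear_combination hs2
    show HasDerivAt F (x ^ 2 * (b / (π * (1 - x ^ 2) * t))) x
    rw [heq]
    exact hcomb
  -- nonnegativity of f
  have hf0 : ∀ x ∈ Set.Ioo (-a) a, 0 ≤ f x := by
    intro x hx
    have h1x : 0 ≤ 1 - x ^ 2 := by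
      nlinarith [hx2le x ⟨hx.1.le, hx.2.le⟩]
    have : 0 ≤ Real.sqrt (a ^ 2 - x ^ 2) := Real.sqrt_nonneg _
    apply mul_nonneg (sq_nonneg x)
    apply div_nonneg hbpos.le
    exact mul_nonneg (mul_nonneg Real.pi_pos.le h1x) this
  -- integrability
  have hint : IntervalIntegrable f MeasureTheory.volume (-a) a := by
    apply intervalIntegral.intervalIntegrable_deriv_of_nonneg (g := F)
    · rwa [Set.uIcc_of_le (by linarith : -a ≤ a)]
    · rwa [min_eq_left (by linarith : -a ≤ a), max_eq_right (by linarith : -a ≤ a)]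
    · rwa [min_eq_left (by linarith : -a ≤ a), max_eq_right (by linarith : -a ≤ a)]
  have key := intervalIntegral.integral_eq_sub_of_hasDerivAt_of_le
    (by linarith : -a ≤ a) hFc hFd hint
  clear_value b F f
  rw [key]
  have hsa : Real.sqrt (1 - a ^ 2) = b := hb.symm
  have hFa : F a = 1 / 2 - b / 2 := by
    simp only [hF, hsa, mul_comm a b]
    rw [div_self ((mul_pos hbpos ha).ne' : b * a ≠ 0), div_self ha.ne', Real.arcsin_one]
    field_simp
  have hFna : F (-a) = -(1 / 2) + b / 2 := by
    simp only [hF, neg_sq, hsa, mul_comm a b]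
    have e2 : b * -a / (b * a) = -1 := by
      rw [mul_neg, neg_div, div_self (mul_pos hbpos ha).ne']
    have e4 : -a / a = -1 := by
      rw [neg_div, div_self ha.ne']
    rw [e2, e4, Real.arcsin_neg_one]
    field_simp
    ring
  rw [hFa, hFna]
  ring
end
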